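/- arXiv:2602.13014 — 2 statements merged into one kernel-verified Lean document; each statement's English description precedes it below -/
import Mathlib

section
/- For n ≥ 2, let X_n and Y_n be the first- and second-order statistics of n i.i.d. draws from the distribution H_n with H_n(q) = (c'(q)/V'(q))^{1/(n−1)} on [0,q^M] and H_n(q)=1 above. Define the expected equilibrium welfare W_n = E[ ∫_Θ r(X_n, Y_n, θ) dF(θ) ], where r(x,y,θ) = ∫_{[0,θ]} max{min{β(s), x}, y} ds is the information rent of type θ under the competitive allocation with highest cap x and second-highest cap y. Then W_{n+1} ≤ W_n for every n ≥ 2. -/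
open MeasureTheory Set Filter Topology
open scoped ENNReal

noncomputable section

/-- The virtual value `φ(θ) = θ - (1 - F(θ))/F'(θ)`. -/
def phi (F : ℝ → ℝ) (θ : ℝ) : ℝ := θ - (1 - F θ) / deriv F θ

/-- Standing hypotheses of the main model. -/
structure MainModel (F g c : ℝ → ℝ) : Prop where
  F_smooth : ContDiff ℝ 2 F
  F_zero : F 0 = 0
  F_one : F 1 = 1
  F_mono : Monotone F
  F_density_pos : ∀ θ ∈ Icc (0:ℝ) 1, 0 < deriv F θ
  phi_mono : StrictMonoOn (phi F) (Icc (0:ℝ) 1)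
  g_zero : g 0 = 0
  g_mono : StrictMonoOn g (Ici (0:ℝ))
  g_concave : StrictConcaveOn ℝ (Ici (0:ℝ)) g
  g_diff : ∀ q ∈ Ioi (0:ℝ), DifferentiableAt ℝ g q
  g_diff2 : ∀ q ∈ Ioi (0:ℝ), DifferentiableAt ℝ (deriv g) q
  c_nonneg : ∀ q : ℝ, 0 ≤ c q
  c_mono : StrictMonoOn c (Ici (0:ℝ))
  c_convex : StrictConvexOn ℝ (Ici (0:ℝ)) c
  c_diff : ∀ q ∈ Ici (0:ℝ), DifferentiableAt ℝ c q
  inada_gtop : Tendsto (deriv g) atTop (nhds 0)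
  inada_czero : deriv c 0 = 0
  inada_ctop : Tendsto (deriv c) atTop atTop
  inada_gzero : Tendsto (deriv g) (nhdsWithin 0 (Ioi 0)) atTop

/-- An allocation: a measurable map from types to (nonnegative) qualities. -/
def IsAllocation (q : ℝ → ℝ) : Prop :=
  Measurable q ∧ ∀ θ ∈ Icc (0:ℝ) 1, 0 ≤ q θ

/-- Total welfare of an allocation. -/
def totalWelfare (F g c : ℝ → ℝ) (q : ℝ → ℝ) : ℝ :=
  (∫ θ in (0:ℝ)..1, (g (q θ) + θ * q θ) * deriv F θ) - c (sSup (q '' Icc (0:ℝ) 1))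

/-- Efficiency: maximize total welfare among allocations. -/
def Efficient (F g c : ℝ → ℝ) (q : ℝ → ℝ) : Prop :=
  IsAllocation q ∧
    ∀ q' : ℝ → ℝ, IsAllocation q' → totalWelfare F g c q' ≤ totalWelfare F g c q

/-- Incentive compatibility and individual rationality of a direct mechanism. -/
def ICIR (g : ℝ → ℝ) (q t : ℝ → ℝ) : Prop :=
  ∀ θ ∈ Icc (0:ℝ) 1,
    (∀ θ' ∈ Icc (0:ℝ) 1, g (q θ') + θ * q θ' - t θ' ≤ g (q θ) + θ * q θ - t θ) ∧
      0 ≤ g (q θ) + θ * q θ - t θ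

/-- The profit of the seller from a mechanism. -/
def profit (F c : ℝ → ℝ) (q t : ℝ → ℝ) : ℝ :=
  (∫ θ in (0:ℝ)..1, t θ * deriv F θ) - c (sSup (q '' Icc (0:ℝ) 1))

/-- A monopolist allocation: part of a profit-maximizing IC-IR mechanism. -/
def Monopolist (F g c : ℝ → ℝ) (q : ℝ → ℝ) : Prop :=
  ∃ t : ℝ → ℝ, IsAllocation q ∧ ICIR g q t ∧
    ∀ q' t' : ℝ → ℝ, IsAllocation q' → ICIR g q' t' →
      profit F c q' t' ≤ profit F c q t

/-- The virtual surplus of an allocation. -/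
def virtSurplus (F g : ℝ → ℝ) (q : ℝ → ℝ) : ℝ :=
  ∫ θ in (0:ℝ)..1, (g (q θ) + phi F θ * q θ) * deriv F θ

/-- Feasibility in the cap-constrained problem `𝒫(qcap)`. -/
def FeasibleCap (qcap : ℝ) (q : ℝ → ℝ) : Prop :=
  IsAllocation q ∧ MonotoneOn q (Icc (0:ℝ) 1) ∧ ∀ θ ∈ Icc (0:ℝ) 1, q θ ≤ qcap

/-- The value `V(qcap)` of the cap-constrained problem `𝒫(qcap)`. -/
def Vval (F g : ℝ → ℝ) (qcap : ℝ) : ℝ :=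
  sSup {v | ∃ q : ℝ → ℝ, FeasibleCap qcap q ∧ v = virtSurplus F g q}

/-- Solving the cap-constrained problem `𝒫(qcap)`. -/
def SolvesCap (F g : ℝ → ℝ) (qcap : ℝ) (q : ℝ → ℝ) : Prop :=
  FeasibleCap qcap q ∧
    ∀ q' : ℝ → ℝ, FeasibleCap qcap q' → virtSurplus F g q' ≤ virtSurplus F g q

/-- The virtual-surplus maximizer `β`, taking the value `⊤` where `φ(θ) ≥ 0`. -/
def IsVSMax (F g : ℝ → ℝ) (βe : ℝ → EReal) : Prop :=
  ∀ θ ∈ Icc (0:ℝ) 1,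
    (0 ≤ phi F θ → βe θ = ⊤) ∧
    (phi F θ < 0 → ∃ qb : ℝ, βe θ = (qb : EReal) ∧ 0 ≤ qb ∧
      ∀ q' : ℝ, 0 ≤ q' → g q' + phi F θ * q' ≤ g qb + phi F θ * qb)

/-- The generalized inverse `b` of the virtual-surplus maximizer. -/
def bfun (βe : ℝ → EReal) (q : ℝ) : ℝ :=
  sInf {θ ∈ Icc (0:ℝ) 1 | (q : EReal) ≤ βe θ}

/-- First-order statistic (maximum) of a finite profile. -/
def Xstat {n : ℕ} (v : Fin n → ℝ) : ℝ := sSup (range v)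

/-- Second-order statistic of a finite profile: `max_{i ≠ j} min (v i) (v j)`. -/
def Ystat {n : ℕ} (v : Fin n → ℝ) : ℝ :=
  sSup {m | ∃ i j : Fin n, i ≠ j ∧ m = min (v i) (v j)}

/-- Information rent of type `θ` under the competitive allocation with highest cap `x`
and second-highest cap `y`: `r(x,y,θ) = ∫_0^θ max{min{β(s), x}, y} ds`. -/
def rent (βe : ℝ → EReal) (x y θ : ℝ) : ℝ :=
  ∫ s in (0:ℝ)..θ, max ((min (βe s) (x : EReal)).toReal) y

/-- Expected equilibrium welfare with `n` active firms drawing caps i.i.d. from `μn`. -/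
def eqWelfare (F : ℝ → ℝ) (βe : ℝ → EReal) (μn : Measure ℝ) (n : ℕ) : ℝ :=
  ∫ v : Fin n → ℝ,
    (∫ θ in (0:ℝ)..1, rent βe (Xstat v) (Ystat v) θ * deriv F θ)
    ∂(Measure.pi fun _ : Fin n => μn)

lemma cdf_dom_Iio {ν₁ ν₂ : Measure ℝ} (hdom : ∀ q, ν₁ (Iic q) ≤ ν₂ (Iic q)) (t : ℝ) :
    ν₁ (Iio t) ≤ ν₂ (Iio t) := by
  have hset : Iio t = ⋃ k : ℕ, Iic (t - ((k:ℝ)+1)⁻¹) := by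
    ext x
    simp only [mem_Iio, mem_iUnion, mem_Iic]
    constructor
    · intro hx
      obtain ⟨n, hn⟩ := exists_nat_one_div_lt (show (0:ℝ) < t - x by linarith)
      exact ⟨n, by rw [one_div] at hn; linarith⟩
    · rintro ⟨k, hk⟩
      have : (0:ℝ) < ((k:ℝ)+1)⁻¹ := by positivity
      linarith
  have hmono : Monotone fun k : ℕ => Iic (t - ((k:ℝ)+1)⁻¹) := by
    intro a b hab
    apply Iic_subset_Iic.2
    have : ((b:ℝ)+1)⁻¹ ≤ ((a:ℝ)+1)⁻¹ := by
      apply inv_anti₀ (by positivity)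
      have : (a:ℝ) ≤ b := Nat.cast_le.2 hab
      linarith
    linarith
  rw [hset, hmono.directed_le.measure_iUnion, hmono.directed_le.measure_iUnion]
  exact iSup_mono fun k => hdom _

lemma integral_mono_of_cdf_le {ν₁ ν₂ : Measure ℝ} [IsProbabilityMeasure ν₁]
    [IsProbabilityMeasure ν₂] {qM : ℝ} (h1 : ν₁ (Iic qM) = 1) (h2 : ν₂ (Iic qM) = 1)
    {f : ℝ → ℝ} (hf : Monotone f) (hfc : Continuous f) {C : ℝ} (hfb : ∀ x, |f x| ≤ C)
    (hdom : ∀ q, ν₁ (Iic q) ≤ ν₂ (Iic q)) :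
    ∫ x, f x ∂ν₂ ≤ ∫ x, f x ∂ν₁ := by
  set γ : StieltjesFunction ℝ := ⟨f, hf, fun x => (hfc.continuousAt).continuousWithinAt⟩ with hγ
  have hγf : ∀ x, γ x = f x := fun x => rfl
  -- the key representation
  have key : ∀ ν : Measure ℝ, IsProbabilityMeasure ν → ν (Iic qM) = 1 →
      ∫ x, f x ∂ν = f qM - (∫⁻ x, γ.measure (Ioc x qM) ∂ν).toReal := by
    intro ν hp hν
    have hae : ∀ᵐ x ∂ν, x ≤ qM := by
      have : ν (Iic qM)ᶜ = 0 := by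
        rw [measure_compl measurableSet_Iic (measure_ne_top ν _), hν, measure_univ, tsub_self]
      filter_upwards [measure_eq_zero_iff_ae_notMem.1 this] with x hx
      simpa using hx
    have hint : Integrable f ν :=
      (integrable_const C).mono' hfc.aestronglyMeasurable (ae_of_all _ (fun x => by
        simpa [Real.norm_eq_abs] using hfb x))
    have h1' : ∫ x, (f qM - f x) ∂ν = f qM - ∫ x, f x ∂ν := by
      rw [integral_sub (integrable_const _) hint, integral_const]
      simp
    have h2' : ∫ x, (f qM - f x) ∂ν = (∫⁻ x, ENNReal.ofReal (f qM - f x) ∂ν).toReal := by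
      apply integral_eq_lintegral_of_nonneg_ae
      · filter_upwards [hae] with x hx
        simp [sub_nonneg, hf hx]
      · exact (continuous_const.sub hfc).aestronglyMeasurable
    have h3' : ∫⁻ x, ENNReal.ofReal (f qM - f x) ∂ν = ∫⁻ x, γ.measure (Ioc x qM) ∂ν := by
      apply lintegral_congr
      intro x
      rw [γ.measure_Ioc]
    rw [← h3', ← h2', h1']
    ring
  -- monotonicity of the lintegral functional
  have hmono : (∫⁻ x, γ.measure (Ioc x qM) ∂ν₁) ≤ ∫⁻ x, γ.measure (Ioc x qM) ∂ν₂ := by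
    have hrepr : ∀ ν : Measure ℝ, IsProbabilityMeasure ν →
        (∫⁻ x, γ.measure (Ioc x qM) ∂ν)
          = ∫⁻ t, (if t ≤ qM then ν (Iio t) else 0) ∂γ.measure := by
      intro ν hp
      have hswap : (∫⁻ x, (∫⁻ t, (Ioc x qM).indicator (fun _ => (1:ℝ≥0∞)) t ∂γ.measure) ∂ν)
          = ∫⁻ t, (∫⁻ x, (Ioc x qM).indicator (fun _ => (1:ℝ≥0∞)) t ∂ν) ∂γ.measure := by
        apply lintegral_lintegral_swap
        have hS : MeasurableSet {p : ℝ × ℝ | p.1 < p.2 ∧ p.2 ≤ qM} :=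
          (measurableSet_lt measurable_fst measurable_snd).inter
            (measurable_snd measurableSet_Iic)
        have : (Function.uncurry fun x t => (Ioc x qM).indicator (fun _ => (1:ℝ≥0∞)) t)
            = {p : ℝ × ℝ | p.1 < p.2 ∧ p.2 ≤ qM}.indicator (fun _ => (1:ℝ≥0∞)) := by
          funext p
          rcases p with ⟨x, t⟩
          by_cases h : x < t ∧ t ≤ qM
          · simp [Function.uncurry, indicator, mem_Ioc, h]
          · simp [Function.uncurry, indicator, mem_Ioc, h]
        rw [this]
        exact (measurable_const.indicator hS).aemeasurable
      calc ∫⁻ x, γ.measure (Ioc x qM) ∂ν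
          = ∫⁻ x, (∫⁻ t, (Ioc x qM).indicator (fun _ => (1:ℝ≥0∞)) t ∂γ.measure) ∂ν := by
            apply lintegral_congr; intro x
            rw [lintegral_indicator measurableSet_Ioc]
            simp
        _ = ∫⁻ t, (∫⁻ x, (Ioc x qM).indicator (fun _ => (1:ℝ≥0∞)) t ∂ν) ∂γ.measure := hswap
        _ = ∫⁻ t, (if t ≤ qM then ν (Iio t) else 0) ∂γ.measure := by
            apply lintegral_congr; intro t
            by_cases ht : t ≤ qM
            · have : (fun x => (Ioc x qM).indicator (fun _ => (1:ℝ≥0∞)) t)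
                  = (Iio t).indicator (fun _ => (1:ℝ≥0∞)) := by
                funext x
                by_cases hx : x < t
                · simp [indicator, mem_Ioc, mem_Iio, hx, ht]
                · simp [indicator, mem_Ioc, mem_Iio, hx]
              rw [this, lintegral_indicator measurableSet_Iio, if_pos ht]
              simp
            · have : (fun x => (Ioc x qM).indicator (fun _ => (1:ℝ≥0∞)) t)
                  = fun _ => 0 := by
                funext x
                have : t ∉ Ioc x qM := fun hc => ht hc.2
                simp [indicator_of_notMem this]
              rw [this, lintegral_zero, if_neg ht]
    rw [hrepr ν₁ inferInstance, hrepr ν₂ inferInstance]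
    apply lintegral_mono
    intro t
    by_cases ht : t ≤ qM
    · simpa [ht] using cdf_dom_Iio hdom t
    · simp [ht]
  have hfin : (∫⁻ x, γ.measure (Ioc x qM) ∂ν₂) ≠ ⊤ := by
    have hb : (∫⁻ x, γ.measure (Ioc x qM) ∂ν₂) ≤ ENNReal.ofReal (C + C) := by
      have : ∀ x, γ.measure (Ioc x qM) ≤ ENNReal.ofReal (C + C) := by
        intro x
        rw [γ.measure_Ioc]
        apply ENNReal.ofReal_le_ofReal
        have h1 := abs_le.1 (hfb qM)
        have h2 := abs_le.1 (hfb x)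
        have : γ qM = f qM := rfl
        have : γ x = f x := rfl
        simp only [hγf]
        linarith [ (abs_le.1 (hfb qM)).2, (abs_le.1 (hfb x)).1 ]
      calc (∫⁻ x, γ.measure (Ioc x qM) ∂ν₂) ≤ ∫⁻ _, ENNReal.ofReal (C + C) ∂ν₂ :=
            lintegral_mono this
        _ = ENNReal.ofReal (C + C) := by simp
    exact ne_top_of_le_ne_top ENNReal.ofReal_ne_top hb
  rw [key ν₁ inferInstance h1, key ν₂ inferInstance h2]
  have := ENNReal.toReal_mono hfin hmono
  linarith


section OrderStats
variable {n : ℕ}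

lemma Ystat_set_finite (v : Fin n → ℝ) :
    {m | ∃ i j : Fin n, i ≠ j ∧ m = min (v i) (v j)}.Finite := by
  have : {m | ∃ i j : Fin n, i ≠ j ∧ m = min (v i) (v j)}
      ⊆ (fun p : Fin n × Fin n => min (v p.1) (v p.2)) '' univ := by
    rintro m ⟨i, j, _, rfl⟩
    exact ⟨⟨i, j⟩, mem_univ _, rfl⟩
  exact Finite.subset (finite_univ.image _) this

lemma Ystat_set_nonempty (hn : 2 ≤ n) (v : Fin n → ℝ) :
    {m | ∃ i j : Fin n, i ≠ j ∧ m = min (v i) (v j)}.Nonempty := by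
  refine ⟨min (v ⟨0, by omega⟩) (v ⟨1, by omega⟩), ⟨0, by omega⟩, ⟨1, by omega⟩, ?_, rfl⟩
  intro h
  exact absurd (congrArg Fin.val h) (by simp)

lemma Xstat_le_iff (hn : 1 ≤ n) (v : Fin n → ℝ) (q : ℝ) :
    Xstat v ≤ q ↔ ∀ i, v i ≤ q := by
  have : Nonempty (Fin n) := ⟨⟨0, by omega⟩⟩
  rw [Xstat, csSup_le_iff (finite_range v).bddAbove (range_nonempty v)]
  constructor
  · intro h i; exact h _ ⟨i, rfl⟩
  · rintro h x ⟨i, rfl⟩; exact h i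

lemma le_Ystat (v : Fin n → ℝ) {i j : Fin n} (hij : i ≠ j) :
    min (v i) (v j) ≤ Ystat v :=
  le_csSup (Ystat_set_finite v).bddAbove ⟨i, j, hij, rfl⟩

lemma Ystat_le_iff (hn : 2 ≤ n) (v : Fin n → ℝ) (q : ℝ) :
    Ystat v ≤ q ↔ ∀ i j : Fin n, i ≠ j → min (v i) (v j) ≤ q := by
  rw [Ystat, csSup_le_iff (Ystat_set_finite v).bddAbove (Ystat_set_nonempty hn v)]
  constructor
  · intro h i j hij; exact h _ ⟨i, j, hij, rfl⟩
  · rintro h m ⟨i, j, hij, rfl⟩; exact h i j hij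

lemma Ystat_le_Xstat (hn : 2 ≤ n) (v : Fin n → ℝ) : Ystat v ≤ Xstat v := by
  rw [Ystat_le_iff hn]
  intro i j hij
  exact le_trans (min_le_left _ _)
    (le_csSup (finite_range v).bddAbove ⟨i, rfl⟩)

lemma Ystat_mem_Icc (hn : 2 ≤ n) (v : Fin n → ℝ) {a b : ℝ} (_hab : a ≤ b)
    (hv : ∀ i, v i ∈ Icc a b) : Ystat v ∈ Icc a b := by
  constructor
  · refine le_trans ?_ (le_Ystat v (i := ⟨0, by omega⟩) (j := ⟨1, by omega⟩)
      (fun h => absurd (congrArg Fin.val h) (by simp)))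
    exact le_min (hv _).1 (hv _).1
  · rw [Ystat_le_iff hn]
    intro i j _
    exact le_trans (min_le_left _ _) (hv i).2

lemma Xstat_mem_Icc (hn : 2 ≤ n) (v : Fin n → ℝ) {a b : ℝ}
    (hv : ∀ i, v i ∈ Icc a b) : Xstat v ∈ Icc a b := by
  constructor
  · refine le_trans (hv ⟨0, by omega⟩).1 (le_csSup (finite_range v).bddAbove ⟨_, rfl⟩)
  · exact (Xstat_le_iff (by omega) v b).2 fun i => (hv i).2

lemma Xstat_preimage (hn : 1 ≤ n) (q : ℝ) :
    (Xstat ⁻¹' Iic q : Set (Fin n → ℝ)) = univ.pi (fun _ => Iic q) := by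
  ext v
  simp only [mem_preimage, mem_Iic, Xstat_le_iff hn, Set.mem_pi, mem_univ, forall_true_left]

lemma Ystat_preimage (hn : 2 ≤ n) (q : ℝ) :
    (Ystat ⁻¹' Iic q : Set (Fin n → ℝ)) =
      (univ.pi (fun _ => Iic q)) ∪
        ⋃ i : Fin n, univ.pi (fun j => if j = i then Ioi q else Iic q) := by
  ext v
  simp only [mem_preimage, mem_Iic, Ystat_le_iff hn, mem_union, Set.mem_pi, mem_univ,
    forall_true_left, mem_iUnion]
  constructor
  · intro h
    by_cases hall : ∀ i, v i ≤ q
    · exact Or.inl hall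
    · push_neg at hall
      obtain ⟨i, hi⟩ := hall
      refine Or.inr ⟨i, fun j => ?_⟩
      by_cases hj : j = i
      · simp [hj, mem_Ioi]; linarith
      · simp only [hj, if_false, mem_Iic]
        by_contra hj'
        push_neg at hj'
        have := h j i hj
        rw [min_le_iff] at this
        rcases this with h' | h' <;> linarith
  · rintro (hall | ⟨i, hi⟩) k l hkl
    · exact le_trans (min_le_left _ _) (hall k)
    · by_cases hk : k = i
      · have hl : l ≠ i := fun h => hkl (hk.trans h.symm)
        have h' := hi l
        simp only [if_neg hl, mem_Iic] at h'
        exact le_trans (min_le_right _ _) h'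
      · have h' := hi k
        simp only [if_neg hk, mem_Iic] at h'
        exact le_trans (min_le_left _ _) h'

lemma measurable_Xstat (hn : 1 ≤ n) : Measurable (Xstat : (Fin n → ℝ) → ℝ) := by
  apply measurable_of_Iic
  intro q
  rw [Xstat_preimage hn]
  exact MeasurableSet.univ_pi fun _ => measurableSet_Iic

lemma measurable_Ystat (hn : 2 ≤ n) : Measurable (Ystat : (Fin n → ℝ) → ℝ) := by
  apply measurable_of_Iic
  intro q
  rw [Ystat_preimage hn]
  exact (MeasurableSet.univ_pi fun _ => measurableSet_Iic).union
    (MeasurableSet.iUnion fun i => MeasurableSet.univ_pi fun j => by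
      by_cases h : j = i <;> simp [h, measurableSet_Ioi, measurableSet_Iic])

lemma Xstat_law (hn : 1 ≤ n) (μ : Measure ℝ) [IsProbabilityMeasure μ] (q : ℝ) :
    (Measure.pi (fun _ : Fin n => μ)) (Xstat ⁻¹' Iic q) = μ (Iic q) ^ n := by
  rw [Xstat_preimage hn, Measure.pi_pi]
  simp [Finset.prod_const]

lemma Ystat_law (hn : 2 ≤ n) (μ : Measure ℝ) [IsProbabilityMeasure μ] (q : ℝ) :
    (Measure.pi (fun _ : Fin n => μ)) (Ystat ⁻¹' Iic q) =
      μ (Iic q) ^ n + n * (μ (Ioi q) * μ (Iic q) ^ (n - 1)) := by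
  rw [Ystat_preimage hn]
  have hdisj : Disjoint (univ.pi (fun _ : Fin n => Iic q))
      (⋃ i : Fin n, univ.pi (fun j => if j = i then Ioi q else Iic q)) := by
    rw [disjoint_iUnion_right]
    intro i
    rw [disjoint_left]
    intro v hv hv'
    have h1 : v i ∈ Iic q := hv i (mem_univ i)
    have h2 : v i ∈ Ioi q := by simpa using hv' i (mem_univ i)
    exact absurd h1 (by simp [mem_Iic, mem_Ioi] at *; linarith)
  rw [measure_union hdisj
    (MeasurableSet.iUnion fun i => MeasurableSet.univ_pi fun j => by
      by_cases h : j = i <;> simp [h, measurableSet_Ioi, measurableSet_Iic])]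
  congr 1
  · rw [Measure.pi_pi]; simp [Finset.prod_const]
  · rw [measure_iUnion ?_ (fun i => MeasurableSet.univ_pi fun j => by
      by_cases h : j = i <;> simp [h, measurableSet_Ioi, measurableSet_Iic])]
    · rw [tsum_fintype]
      have heach : ∀ i : Fin n,
          (Measure.pi (fun _ : Fin n => μ)) (univ.pi (fun j => if j = i then Ioi q else Iic q))
            = μ (Ioi q) * μ (Iic q) ^ (n - 1) := by
        intro i
        rw [Measure.pi_pi]
        rw [← Finset.mul_prod_erase Finset.univ _ (Finset.mem_univ i)]
        simp only [if_pos rfl]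
        congr 1
        rw [Finset.prod_congr rfl (fun j hj => ?_), Finset.prod_const,
          Finset.card_erase_of_mem (Finset.mem_univ i), Finset.card_univ, Fintype.card_fin]
        rw [if_neg (Finset.mem_erase.1 hj).1]
      rw [Finset.sum_congr rfl (fun i _ => heach i), Finset.sum_const, Finset.card_univ,
        Fintype.card_fin, nsmul_eq_mul]
    · intro i k hik
      rw [Function.onFun, disjoint_left]
      intro v hv hv'
      have h1 := hv i (mem_univ i)
      have h2 := hv' i (mem_univ i)
      simp only [if_pos rfl] at h1
      simp only [if_neg hik] at h2
      simp [mem_Ioi, mem_Iic] at h1 h2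
      linarith

end OrderStats


section RentDecomp

variable {βe : ℝ → EReal}

/-- local abbreviation: the capped allocation value. -/
def mfun (βe : ℝ → EReal) (x s : ℝ) : ℝ := (min (βe s) (x : EReal)).toReal

lemma coe_min_le {s x : ℝ} (h0 : ∀ s ∈ Icc (0:ℝ) 1, 0 ≤ βe s) (hs : s ∈ Icc (0:ℝ) 1) :
    ((min x 0 : ℝ) : EReal) ≤ min (βe s) (x : EReal) := by
  apply le_min
  · exact le_trans (show ((min x 0 : ℝ) : EReal) ≤ ((0:ℝ) : EReal) by
      exact_mod_cast min_le_right x 0) (by exact_mod_cast h0 s hs)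
  · exact_mod_cast min_le_left x 0

lemma min_ne_bot' {s x : ℝ} (h0 : ∀ s ∈ Icc (0:ℝ) 1, 0 ≤ βe s) (hs : s ∈ Icc (0:ℝ) 1) :
    min (βe s) (x : EReal) ≠ ⊥ := by
  have h1 := coe_min_le h0 hs (x := x)
  intro hc
  rw [hc] at h1
  exact absurd h1 (by simp)

lemma min_ne_top {s x : ℝ} : min (βe s) (x : EReal) ≠ ⊤ :=
  ne_top_of_le_ne_top (EReal.coe_ne_top x) (min_le_right _ _)

lemma mfun_le {s x : ℝ} (h0 : ∀ s ∈ Icc (0:ℝ) 1, 0 ≤ βe s) (hs : s ∈ Icc (0:ℝ) 1) :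
    mfun βe x s ≤ x := by
  have := EReal.toReal_le_toReal (min_le_right (βe s) (x : EReal)) (min_ne_bot' h0 hs)
    (EReal.coe_ne_top x)
  simpa [EReal.toReal_coe, mfun] using this

lemma le_mfun {s x : ℝ} (h0 : ∀ s ∈ Icc (0:ℝ) 1, 0 ≤ βe s) (hs : s ∈ Icc (0:ℝ) 1) :
    min x 0 ≤ mfun βe x s := by
  have := EReal.toReal_le_toReal (coe_min_le h0 hs (x := x)) (EReal.coe_ne_bot _) min_ne_top
  simpa [EReal.toReal_coe, mfun] using this

lemma mfun_nonneg {s x : ℝ} (h0 : ∀ s ∈ Icc (0:ℝ) 1, 0 ≤ βe s) (hs : s ∈ Icc (0:ℝ) 1)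
    (hx : 0 ≤ x) : 0 ≤ mfun βe x s := by
  have := le_mfun h0 hs (x := x)
  rw [min_eq_right hx] at this
  exact this

lemma mfun_mono_s {x : ℝ} (h0 : ∀ s ∈ Icc (0:ℝ) 1, 0 ≤ βe s)
    (hβm : MonotoneOn βe (Icc (0:ℝ) 1)) : MonotoneOn (mfun βe x) (Icc (0:ℝ) 1) := by
  intro s hs t ht hst
  exact EReal.toReal_le_toReal (min_le_min (hβm hs ht hst) le_rfl) (min_ne_bot' h0 hs) min_ne_top

lemma mfun_mono_x {s x x' : ℝ} (h0 : ∀ s ∈ Icc (0:ℝ) 1, 0 ≤ βe s) (hs : s ∈ Icc (0:ℝ) 1)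
    (hx : x ≤ x') : mfun βe x s ≤ mfun βe x' s :=
  EReal.toReal_le_toReal (min_le_min le_rfl (by exact_mod_cast hx)) (min_ne_bot' h0 hs) min_ne_top

lemma mfun_lip_x {s x x' : ℝ} (h0 : ∀ s ∈ Icc (0:ℝ) 1, 0 ≤ βe s) (hs : s ∈ Icc (0:ℝ) 1)
    (hx : x ≤ x') : mfun βe x' s ≤ mfun βe x s + (x' - x) := by
  rcases le_total (βe s) (x : EReal) with hb | hb
  · have h1 : mfun βe x s = (βe s).toReal := by rw [mfun, min_eq_left hb]
    have h2 : mfun βe x' s = (βe s).toReal := by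
      rw [mfun, min_eq_left (le_trans hb (by exact_mod_cast hx))]
    rw [h1, h2]
    linarith
  · have h1 : mfun βe x s = x := by rw [mfun, min_eq_right hb, EReal.toReal_coe]
    have h2 : mfun βe x' s ≤ x' := mfun_le h0 hs
    rw [h1]
    linarith

lemma mfun_median {s x y : ℝ} (h0 : ∀ s ∈ Icc (0:ℝ) 1, 0 ≤ βe s) (hs : s ∈ Icc (0:ℝ) 1)
    (hy : 0 ≤ y) (hyx : y ≤ x) :
    max (mfun βe x s) y = mfun βe x s + y - mfun βe y s := by
  rcases le_total (βe s) (y : EReal) with hb | hb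
  · have h1 : mfun βe y s = (βe s).toReal := by rw [mfun, min_eq_left hb]
    have h2 : mfun βe x s = (βe s).toReal := by
      rw [mfun, min_eq_left (le_trans hb (by exact_mod_cast hyx))]
    have h3 : mfun βe x s ≤ y := by
      rw [h2]
      have := EReal.toReal_le_toReal hb (by
        intro hc
        have hb0 := h0 s hs
        rw [hc] at hb0
        exact absurd hb0 (by simp)) (EReal.coe_ne_top y)
      simpa [EReal.toReal_coe] using this
    rw [max_eq_right h3, h1, h2]
    ring
  · have h1 : mfun βe y s = y := by rw [mfun, min_eq_right hb, EReal.toReal_coe]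
    have h2 : y ≤ mfun βe x s := by
      have hle : ((y:ℝ) : EReal) ≤ min (βe s) (x : EReal) := le_min hb (by exact_mod_cast hyx)
      have := EReal.toReal_le_toReal hle (EReal.coe_ne_bot _) min_ne_top
      simpa [EReal.toReal_coe, mfun] using this
    rw [max_eq_left h2, h1]
    ring

/-- `ρ(x, θ) = ∫_0^θ min(β(s), x) ds`. -/
def rho (βe : ℝ → EReal) (x θ : ℝ) : ℝ := ∫ s in (0:ℝ)..θ, mfun βe x s

variable (h0 : ∀ s ∈ Icc (0:ℝ) 1, 0 ≤ βe s) (hβm : MonotoneOn βe (Icc (0:ℝ) 1))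

lemma mfun_intervalIntegrable (h0 : ∀ s ∈ Icc (0:ℝ) 1, 0 ≤ βe s)
    (hβm : MonotoneOn βe (Icc (0:ℝ) 1)) {x θ : ℝ} (hθ : θ ∈ Icc (0:ℝ) 1) :
    IntervalIntegrable (mfun βe x) volume 0 θ := by
  apply MonotoneOn.intervalIntegrable
  apply (mfun_mono_s h0 hβm).mono
  rw [uIcc_of_le hθ.1]
  exact Icc_subset_Icc le_rfl hθ.2

lemma rho_mono_x (h0 : ∀ s ∈ Icc (0:ℝ) 1, 0 ≤ βe s) (hβm : MonotoneOn βe (Icc (0:ℝ) 1))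
    {x x' θ : ℝ} (hθ : θ ∈ Icc (0:ℝ) 1) (hx : x ≤ x') :
    rho βe x θ ≤ rho βe x' θ := by
  apply intervalIntegral.integral_mono_on hθ.1 (mfun_intervalIntegrable h0 hβm hθ)
    (mfun_intervalIntegrable h0 hβm hθ)
  intro s hs
  exact mfun_mono_x h0 (Icc_subset_Icc le_rfl hθ.2 hs) hx

lemma rho_lip_x (h0 : ∀ s ∈ Icc (0:ℝ) 1, 0 ≤ βe s) (hβm : MonotoneOn βe (Icc (0:ℝ) 1))
    {x x' θ : ℝ} (hθ : θ ∈ Icc (0:ℝ) 1) (hx : x ≤ x') :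
    rho βe x' θ ≤ rho βe x θ + θ * (x' - x) := by
  have h1 : rho βe x' θ ≤ ∫ s in (0:ℝ)..θ, (mfun βe x s + (x' - x)) := by
    apply intervalIntegral.integral_mono_on hθ.1 (mfun_intervalIntegrable h0 hβm hθ)
      ((mfun_intervalIntegrable h0 hβm hθ).add intervalIntegrable_const)
    intro s hs
    exact mfun_lip_x h0 (Icc_subset_Icc le_rfl hθ.2 hs) hx
  rw [intervalIntegral.integral_add (mfun_intervalIntegrable h0 hβm hθ)
    intervalIntegrable_const, intervalIntegral.integral_const] at h1
  rw [rho]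
  simpa [smul_eq_mul, rho] using h1

lemma rho_nonneg (h0 : ∀ s ∈ Icc (0:ℝ) 1, 0 ≤ βe s) {x θ : ℝ} (hθ : θ ∈ Icc (0:ℝ) 1)
    (hx : 0 ≤ x) : 0 ≤ rho βe x θ := by
  apply intervalIntegral.integral_nonneg hθ.1
  intro s hs
  exact mfun_nonneg h0 (Icc_subset_Icc le_rfl hθ.2 hs) hx

lemma rho_le (h0 : ∀ s ∈ Icc (0:ℝ) 1, 0 ≤ βe s) (hβm : MonotoneOn βe (Icc (0:ℝ) 1))
    {x θ : ℝ} (hθ : θ ∈ Icc (0:ℝ) 1) (hx : 0 ≤ x) : rho βe x θ ≤ θ * x := by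
  have h1 : rho βe x θ ≤ ∫ _ in (0:ℝ)..θ, x := by
    apply intervalIntegral.integral_mono_on hθ.1 (mfun_intervalIntegrable h0 hβm hθ)
      intervalIntegrable_const
    intro s hs
    exact mfun_le h0 (Icc_subset_Icc le_rfl hθ.2 hs)
  simpa [smul_eq_mul] using h1

lemma rho_mono_theta (h0 : ∀ s ∈ Icc (0:ℝ) 1, 0 ≤ βe s) (hβm : MonotoneOn βe (Icc (0:ℝ) 1))
    {x : ℝ} (hx : 0 ≤ x) : MonotoneOn (rho βe x) (Icc (0:ℝ) 1) := by
  intro a ha b hb hab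
  have hia : IntervalIntegrable (mfun βe x) volume 0 a := mfun_intervalIntegrable h0 hβm ha
  have hiab : IntervalIntegrable (mfun βe x) volume a b := by
    apply MonotoneOn.intervalIntegrable
    apply (mfun_mono_s h0 hβm).mono
    rw [uIcc_of_le hab]
    exact Icc_subset_Icc ha.1 hb.2
  have hadd := intervalIntegral.integral_add_adjacent_intervals hia hiab
  have hpos : 0 ≤ ∫ s in a..b, mfun βe x s := by
    apply intervalIntegral.integral_nonneg hab
    intro s hs
    exact mfun_nonneg h0 ⟨le_trans ha.1 hs.1, le_trans hs.2 hb.2⟩ hx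
  show rho βe x a ≤ rho βe x b
  rw [rho, rho, ← hadd]
  linarith

lemma rent_eq (h0 : ∀ s ∈ Icc (0:ℝ) 1, 0 ≤ βe s) (hβm : MonotoneOn βe (Icc (0:ℝ) 1))
    {x y θ : ℝ} (hθ : θ ∈ Icc (0:ℝ) 1) (hy : 0 ≤ y) (hyx : y ≤ x) :
    rent βe x y θ = rho βe x θ + θ * y - rho βe y θ := by
  have hcongr : rent βe x y θ = ∫ s in (0:ℝ)..θ, (mfun βe x s + y - mfun βe y s) := by
    apply intervalIntegral.integral_congr
    intro s hs
    rw [uIcc_of_le hθ.1] at hs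
    exact mfun_median h0 (Icc_subset_Icc le_rfl hθ.2 hs) hy hyx
  rw [hcongr, intervalIntegral.integral_sub (((mfun_intervalIntegrable h0 hβm hθ)).add
    intervalIntegrable_const) (mfun_intervalIntegrable h0 hβm hθ),
    intervalIntegral.integral_add (mfun_intervalIntegrable h0 hβm hθ) intervalIntegrable_const,
    intervalIntegral.integral_const]
  rw [rho, rho]
  simp [smul_eq_mul]

end RentDecomp

section Abar

variable {βe : ℝ → EReal} {F : ℝ → ℝ}

/-- `Ā(x) = ∫_0^1 ρ(x,θ) F'(θ) dθ`. -/
def Abar (βe : ℝ → EReal) (F : ℝ → ℝ) (x : ℝ) : ℝ :=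
  ∫ θ in (0:ℝ)..1, rho βe x θ * deriv F θ

/-- `c₀ = ∫_0^1 θ F'(θ) dθ`. -/
def c0 (F : ℝ → ℝ) : ℝ := ∫ θ in (0:ℝ)..1, θ * deriv F θ

lemma rho_mul_intervalIntegrable (h0 : ∀ s ∈ Icc (0:ℝ) 1, 0 ≤ βe s)
    (hβm : MonotoneOn βe (Icc (0:ℝ) 1)) (hF'c : Continuous (deriv F)) {x : ℝ} (hx : 0 ≤ x) :
    IntervalIntegrable (fun θ => rho βe x θ * deriv F θ) volume 0 1 := by
  apply IntervalIntegrable.mul_continuousOn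
  · apply MonotoneOn.intervalIntegrable
    apply (rho_mono_theta h0 hβm hx).mono
    rw [uIcc_of_le zero_le_one]
  · exact hF'c.continuousOn

lemma theta_mul_intervalIntegrable (hF'c : Continuous (deriv F)) :
    IntervalIntegrable (fun θ => θ * deriv F θ) volume 0 1 :=
  (continuous_id.mul hF'c).intervalIntegrable 0 1

lemma c0_nonneg (hF'0 : ∀ θ ∈ Icc (0:ℝ) 1, 0 ≤ deriv F θ) (hF'c : Continuous (deriv F)) :
    0 ≤ c0 F := by
  apply intervalIntegral.integral_nonneg zero_le_one
  intro θ hθ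
  exact mul_nonneg hθ.1 (hF'0 θ hθ)

lemma Abar_mono (h0 : ∀ s ∈ Icc (0:ℝ) 1, 0 ≤ βe s) (hβm : MonotoneOn βe (Icc (0:ℝ) 1))
    (hF'c : Continuous (deriv F)) (hF'0 : ∀ θ ∈ Icc (0:ℝ) 1, 0 ≤ deriv F θ)
    {x x' : ℝ} (hx : 0 ≤ x) (hxx : x ≤ x') : Abar βe F x ≤ Abar βe F x' := by
  apply intervalIntegral.integral_mono_on zero_le_one
    (rho_mul_intervalIntegrable h0 hβm hF'c hx)
    (rho_mul_intervalIntegrable h0 hβm hF'c (le_trans hx hxx))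
  intro θ hθ
  exact mul_le_mul_of_nonneg_right (rho_mono_x h0 hβm hθ hxx) (hF'0 θ hθ)

lemma Abar_lip (h0 : ∀ s ∈ Icc (0:ℝ) 1, 0 ≤ βe s) (hβm : MonotoneOn βe (Icc (0:ℝ) 1))
    (hF'c : Continuous (deriv F)) (hF'0 : ∀ θ ∈ Icc (0:ℝ) 1, 0 ≤ deriv F θ)
    {x x' : ℝ} (hx : 0 ≤ x) (hxx : x ≤ x') :
    Abar βe F x' ≤ Abar βe F x + c0 F * (x' - x) := by
  have h1 : Abar βe F x' ≤ ∫ θ in (0:ℝ)..1, (rho βe x θ * deriv F θ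
      + (x' - x) * (θ * deriv F θ)) := by
    apply intervalIntegral.integral_mono_on zero_le_one
      (rho_mul_intervalIntegrable h0 hβm hF'c (le_trans hx hxx))
      ((rho_mul_intervalIntegrable h0 hβm hF'c hx).add
        ((theta_mul_intervalIntegrable hF'c).const_mul _))
    intro θ hθ
    have := rho_lip_x h0 hβm hθ hxx
    have h2 := hF'0 θ hθ
    nlinarith [mul_le_mul_of_nonneg_right this h2]
  rw [intervalIntegral.integral_add (rho_mul_intervalIntegrable h0 hβm hF'c hx)
    ((theta_mul_intervalIntegrable hF'c).const_mul _),
    intervalIntegral.integral_const_mul] at h1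
  rw [Abar]
  rw [Abar, c0] at *
  linarith

lemma welfare_eq (h0 : ∀ s ∈ Icc (0:ℝ) 1, 0 ≤ βe s) (hβm : MonotoneOn βe (Icc (0:ℝ) 1))
    (hF'c : Continuous (deriv F)) {x y : ℝ} (hy : 0 ≤ y) (hyx : y ≤ x) :
    (∫ θ in (0:ℝ)..1, rent βe x y θ * deriv F θ)
      = Abar βe F x + c0 F * y - Abar βe F y := by
  have hcongr : (∫ θ in (0:ℝ)..1, rent βe x y θ * deriv F θ)
      = ∫ θ in (0:ℝ)..1, ((rho βe x θ * deriv F θ + y * (θ * deriv F θ))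
          - rho βe y θ * deriv F θ) := by
    apply intervalIntegral.integral_congr
    intro θ hθ
    rw [uIcc_of_le zero_le_one] at hθ
    show rent βe x y θ * deriv F θ = _
    rw [rent_eq h0 hβm hθ hy hyx]
    ring
  rw [hcongr, intervalIntegral.integral_sub
    ((rho_mul_intervalIntegrable h0 hβm hF'c (le_trans hy hyx)).add
      ((theta_mul_intervalIntegrable hF'c).const_mul _))
    (rho_mul_intervalIntegrable h0 hβm hF'c hy),
    intervalIntegral.integral_add
      (rho_mul_intervalIntegrable h0 hβm hF'c (le_trans hy hyx))
      ((theta_mul_intervalIntegrable hF'c).const_mul _),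
    intervalIntegral.integral_const_mul]
  rw [Abar, Abar, c0]
  ring

end Abar


lemma scalarA {r : ℝ} (hr0 : 0 ≤ r) (hr1 : r ≤ 1) {n : ℕ} (hn : 2 ≤ n) :
    (r ^ (((n:ℝ) - 1)⁻¹)) ^ n ≤ (r ^ ((n:ℝ))⁻¹) ^ (n + 1) := by
  have hn2 : (2:ℝ) ≤ (n:ℝ) := by exact_mod_cast hn
  have h1 : (0:ℝ) < (n:ℝ) - 1 := by linarith
  have h2 : (0:ℝ) < (n:ℝ) := by linarith
  rcases eq_or_lt_of_le hr0 with h0 | h0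
  · rw [← h0, Real.zero_rpow (inv_ne_zero (by linarith)),
      Real.zero_rpow (inv_ne_zero (by linarith)),
      zero_pow (show n ≠ 0 by omega), zero_pow (show n + 1 ≠ 0 by omega)]
  · rw [← Real.rpow_natCast (r ^ (((n:ℝ) - 1)⁻¹)) n, ← Real.rpow_natCast (r ^ ((n:ℝ))⁻¹) (n+1),
      ← Real.rpow_mul hr0, ← Real.rpow_mul hr0]
    apply Real.rpow_le_rpow_of_exponent_ge h0 hr1
    have h1 : (0:ℝ) < (n:ℝ) - 1 := by linarith
    have h2 : (0:ℝ) < (n:ℝ) := by linarith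
    rw [inv_mul_eq_div, inv_mul_eq_div, div_le_div_iff₀ h2 h1]
    push_cast
    nlinarith

lemma scalarB {r : ℝ} (hr0 : 0 ≤ r) (hr1 : r ≤ 1) {n : ℕ} (hn : 2 ≤ n) :
    (r ^ (((n:ℝ) - 1)⁻¹)) ^ n
        + (n:ℝ) * ((1 - r ^ (((n:ℝ) - 1)⁻¹)) * (r ^ (((n:ℝ) - 1)⁻¹)) ^ (n - 1))
      ≤ (r ^ ((n:ℝ))⁻¹) ^ (n + 1)
        + ((n:ℝ) + 1) * ((1 - r ^ ((n:ℝ))⁻¹) * (r ^ ((n:ℝ))⁻¹) ^ n) := by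
  have hn2 : (2:ℝ) ≤ (n:ℝ) := by exact_mod_cast hn
  have h1 : (0:ℝ) < (n:ℝ) - 1 := by linarith
  have h2 : (0:ℝ) < (n:ℝ) := by linarith
  set a := r ^ (((n:ℝ) - 1)⁻¹) with ha
  set b := r ^ ((n:ℝ))⁻¹ with hb
  rcases eq_or_lt_of_le hr0 with h0 | h0
  · have haz : a = 0 := by rw [ha, ← h0, Real.zero_rpow (inv_ne_zero (by linarith))]
    have hbz : b = 0 := by rw [hb, ← h0, Real.zero_rpow (inv_ne_zero (by linarith))]
    have e1 : (0:ℝ)^n = 0 := zero_pow (by omega)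
    have e2 : (0:ℝ)^(n+1) = 0 := zero_pow (by omega)
    have e3 : (0:ℝ)^(n-1) = 0 := zero_pow (by omega)
    rw [haz, hbz, e1, e2, e3]
    norm_num
  · have ha0 : 0 ≤ a := Real.rpow_nonneg hr0 _
    have hb0 : 0 ≤ b := Real.rpow_nonneg hr0 _
    have han1 : a ^ (n - 1) = r := by
      rw [ha, ← Real.rpow_natCast _ (n-1), ← Real.rpow_mul hr0]
      have : ((n:ℝ) - 1)⁻¹ * ((n - 1 : ℕ):ℝ) = 1 := by
        rw [Nat.cast_sub (by omega)]
        push_cast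
        field_simp
      rw [this, Real.rpow_one]
    have han : a ^ n = r * a := by
      have : n = (n - 1) + 1 := by omega
      rw [this, pow_succ, han1]
    have hbn : b ^ n = r := by
      rw [hb, ← Real.rpow_natCast _ n, ← Real.rpow_mul hr0]
      rw [inv_mul_cancel₀ (by positivity), Real.rpow_one]
    have hbn1 : b ^ (n + 1) = r * b := by rw [pow_succ, hbn, mul_comm r b, mul_comm]
    rw [han, han1, hbn, hbn1]
    -- goal : r*a + n*((1-a)*r) ≤ r*b + (n+1)*((1-b)*r)
    -- equivalent to n*b ≤ 1 + (n-1)*a  (after dividing by r > 0)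
    have hkey : (n:ℝ) * b ≤ 1 + ((n:ℝ) - 1) * a := by
      have hgm := Real.geom_mean_le_arith_mean2_weighted
        (show (0:ℝ) ≤ 1/(n:ℝ) by positivity)
        (show (0:ℝ) ≤ ((n:ℝ)-1)/(n:ℝ) by positivity)
        (show (0:ℝ) ≤ 1 by norm_num) ha0
        (show 1/(n:ℝ) + ((n:ℝ)-1)/(n:ℝ) = 1 by field_simp; ring)
      have hba : b = 1 ^ (1/(n:ℝ)) * a ^ (((n:ℝ)-1)/(n:ℝ)) := by
        rw [Real.one_rpow, one_mul, ha, ← Real.rpow_mul hr0, hb]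
        congr 1
        field_simp
      rw [← hba] at hgm
      have := mul_le_mul_of_nonneg_left hgm (le_of_lt h2)
      calc (n:ℝ) * b ≤ (n:ℝ) * (1/(n:ℝ) * 1 + ((n:ℝ)-1)/(n:ℝ) * a) := this
        _ = 1 + ((n:ℝ) - 1) * a := by field_simp
    nlinarith



/-- clamp to `[0, qM]`. -/
def clamp (qM x : ℝ) : ℝ := min (max x 0) qM

lemma clamp_mem {qM x : ℝ} (h : 0 ≤ qM) : clamp qM x ∈ Icc 0 qM :=
  ⟨le_min (le_max_right _ _) h, min_le_right _ _⟩

lemma clamp_eq {qM x : ℝ} (hx : x ∈ Icc 0 qM) : clamp qM x = x := by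
  rw [clamp, max_eq_left hx.1, min_eq_left hx.2]

lemma clamp_mono {qM : ℝ} : Monotone (clamp qM) := fun a b hab =>
  min_le_min (max_le_max hab le_rfl) le_rfl

lemma clamp_lip {qM : ℝ} (x y : ℝ) : |clamp qM x - clamp qM y| ≤ |x - y| := by
  have h1 := abs_min_sub_min_le_max (max x 0) qM (max y 0) qM
  have h2 := abs_max_sub_max_le_abs x y 0
  have h3 : |qM - qM| = 0 := by simp
  rw [h3] at h1
  calc |clamp qM x - clamp qM y| ≤ max |max x 0 - max y 0| 0 := h1
    _ ≤ |x - y| := max_le (by linarith) (abs_nonneg _)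

lemma beta_nonneg {F g : ℝ → ℝ} {βe : ℝ → EReal} (hβ : IsVSMax F g βe) :
    ∀ s ∈ Icc (0:ℝ) 1, 0 ≤ βe s := by
  intro s hs
  rcases le_or_gt 0 (phi F s) with h | h
  · rw [(hβ s hs).1 h]; exact le_top
  · obtain ⟨qb, hq, hq0, -⟩ := (hβ s hs).2 h
    rw [hq]
    exact_mod_cast hq0

lemma beta_mono {F g : ℝ → ℝ} {βe : ℝ → EReal} (hβ : IsVSMax F g βe)
    (hφ : StrictMonoOn (phi F) (Icc (0:ℝ) 1)) : MonotoneOn βe (Icc (0:ℝ) 1) := by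
  intro s hs t ht hst
  rcases eq_or_lt_of_le hst with rfl | hlt
  · exact le_rfl
  have hφlt : phi F s < phi F t := hφ hs ht hlt
  rcases le_or_gt 0 (phi F t) with h2 | h2
  · rw [(hβ t ht).1 h2]; exact le_top
  · have h1 : phi F s < 0 := lt_trans hφlt h2
    obtain ⟨qs, hqs, hqs0, hmaxs⟩ := (hβ s hs).2 h1
    obtain ⟨qt, hqt, hqt0, hmaxt⟩ := (hβ t ht).2 h2
    rw [hqs, hqt]
    have hA := hmaxs qt hqt0
    have hB := hmaxt qs hqs0
    have : qs ≤ qt := by nlinarith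
    exact_mod_cast this

lemma Abar_abs_sub {βe : ℝ → EReal} {F : ℝ → ℝ} (h0 : ∀ s ∈ Icc (0:ℝ) 1, 0 ≤ βe s)
    (hβm : MonotoneOn βe (Icc (0:ℝ) 1)) (hF'c : Continuous (deriv F))
    (hF'0 : ∀ θ ∈ Icc (0:ℝ) 1, 0 ≤ deriv F θ) {a b : ℝ} (ha : 0 ≤ a) (hb : 0 ≤ b) :
    |Abar βe F a - Abar βe F b| ≤ c0 F * |a - b| := by
  rcases le_total a b with h | h
  · have h1 := Abar_mono h0 hβm hF'c hF'0 ha h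
    have h2 := Abar_lip h0 hβm hF'c hF'0 ha h
    rw [abs_of_nonpos (by linarith), abs_of_nonpos (by linarith)]
    linarith
  · have h1 := Abar_mono h0 hβm hF'c hF'0 hb h
    have h2 := Abar_lip h0 hβm hF'c hF'0 hb h
    rw [abs_of_nonneg (by linarith), abs_of_nonneg (by linarith)]
    linarith

lemma eqWelfare_repr {F : ℝ → ℝ} {βe : ℝ → EReal}
    (h0 : ∀ s ∈ Icc (0:ℝ) 1, 0 ≤ βe s) (hβm : MonotoneOn βe (Icc (0:ℝ) 1))
    (hF'c : Continuous (deriv F))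
    {qM : ℝ} (hqM0 : 0 ≤ qM) (μk : Measure ℝ) [IsProbabilityMeasure μk]
    (hsupp : μk (Icc 0 qM) = 1) (k : ℕ) (hk : 2 ≤ k)
    {fx fy : ℝ → ℝ}
    (hfx : ∀ z ∈ Icc (0:ℝ) qM, fx z = Abar βe F z)
    (hfy : ∀ z ∈ Icc (0:ℝ) qM, fy z = c0 F * z - Abar βe F z)
    (hfxm : Measurable fx) (hfym : Measurable fy)
    {C : ℝ} (hfxb : ∀ z, |fx z| ≤ C) (hfyb : ∀ z, |fy z| ≤ C) :
    eqWelfare F βe μk k = (∫ v, fx (Xstat v) ∂(Measure.pi fun _ : Fin k => μk))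
      + ∫ v, fy (Ystat v) ∂(Measure.pi fun _ : Fin k => μk) := by
  set π := Measure.pi (fun _ : Fin k => μk) with hπdef
  have hae : ∀ᵐ v ∂π, ∀ i, v i ∈ Icc (0:ℝ) qM := by
    have hpi : π (univ.pi fun _ : Fin k => Icc (0:ℝ) qM) = 1 := by
      rw [hπdef, Measure.pi_pi]
      simp [hsupp]
    have hc : π ((univ.pi fun _ : Fin k => Icc (0:ℝ) qM)ᶜ) = 0 := by
      rw [measure_compl (MeasurableSet.univ_pi fun _ => measurableSet_Icc)
        (measure_ne_top _ _), hpi, measure_univ, tsub_self]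
    filter_upwards [measure_eq_zero_iff_ae_notMem.1 hc] with v hv
    intro i
    exact (notMem_compl_iff.1 hv) i (mem_univ i)
  have hmX : Measurable fun v : Fin k → ℝ => fx (Xstat v) :=
    hfxm.comp (measurable_Xstat (by omega))
  have hmY : Measurable fun v : Fin k → ℝ => fy (Ystat v) :=
    hfym.comp (measurable_Ystat hk)
  have hiX : Integrable (fun v => fx (Xstat v)) π :=
    (integrable_const C).mono' hmX.aestronglyMeasurable
      (ae_of_all _ fun v => by simpa [Real.norm_eq_abs] using hfxb _)
  have hiY : Integrable (fun v => fy (Ystat v)) π :=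
    (integrable_const C).mono' hmY.aestronglyMeasurable
      (ae_of_all _ fun v => by simpa [Real.norm_eq_abs] using hfyb _)
  have hcong : ∀ᵐ v ∂π, (∫ θ in (0:ℝ)..1, rent βe (Xstat v) (Ystat v) θ * deriv F θ)
      = fx (Xstat v) + fy (Ystat v) := by
    filter_upwards [hae] with v hv
    have hX := Xstat_mem_Icc hk v hv
    have hY := Ystat_mem_Icc hk v hqM0 hv
    have hYX := Ystat_le_Xstat hk v
    rw [welfare_eq h0 hβm hF'c hY.1 hYX, hfx _ hX, hfy _ hY]
    ring
  show (∫ v, (∫ θ in (0:ℝ)..1, rent βe (Xstat v) (Ystat v) θ * deriv F θ) ∂π) = _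
  rw [integral_congr_ae hcong, integral_add hiX hiY]


/-- welfare decreases in the number of active firms. With `μ n` the
equilibrium cap distribution `H_n(q) = (c'(q)/V'(q))^(1/(n-1))` on `[0, q^M]`, the
expected equilibrium welfare `W_n` satisfies `W_{n+1} ≤ W_n` for every `n ≥ 2`. -/
theorem stmt17 (F g c : ℝ → ℝ) (hM : MainModel F g c)
    (βe : ℝ → EReal) (hβ : IsVSMax F g βe)
    (qM : ℝ)
    (hqM : 0 ≤ qM ∧
      (∀ q : ℝ, 0 ≤ q → Vval F g q - c q ≤ Vval F g qM - c qM) ∧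
      ∀ q : ℝ, 0 ≤ q →
        (∀ q' : ℝ, 0 ≤ q' → Vval F g q' - c q' ≤ Vval F g q - c q) → q = qM)
    (μ : ℕ → Measure ℝ)
    (hμ : ∀ n : ℕ, 2 ≤ n → IsProbabilityMeasure (μ n) ∧
      ∀ q : ℝ, ((μ n) (Iic q)).toReal =
        if q < 0 then 0
        else if q ≤ qM then (deriv c q / deriv (Vval F g) q) ^ (((n : ℝ) - 1)⁻¹)
        else 1) :
    ∀ n : ℕ, 2 ≤ n →
      eqWelfare F βe (μ (n + 1)) (n + 1) ≤ eqWelfare F βe (μ n) n := by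
  intro n hn
  classical
  have hF'c : Continuous (deriv F) := hM.F_smooth.continuous_deriv (by norm_num)
  have hF'0 : ∀ θ ∈ Icc (0:ℝ) 1, 0 ≤ deriv F θ := fun θ hθ => (hM.F_density_pos θ hθ).le
  have h0 : ∀ s ∈ Icc (0:ℝ) 1, 0 ≤ βe s := beta_nonneg hβ
  have hβm : MonotoneOn βe (Icc (0:ℝ) 1) := beta_mono hβ hM.phi_mono
  obtain ⟨hqM0, -, -⟩ := hqM
  obtain ⟨hp1, hcdf1⟩ := hμ n hn
  obtain ⟨hp2, hcdf2⟩ := hμ (n+1) (by omega)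
  obtain ⟨hp₀, hcdf₀⟩ := hμ 2 le_rfl
  haveI := hp1; haveI := hp2; haveI := hp₀
  have hrb : ∀ q : ℝ, 0 ≤ q → q ≤ qM →
      0 ≤ deriv c q / deriv (Vval F g) q ∧ deriv c q / deriv (Vval F g) q ≤ 1 := by
    intro q hq hq'
    have h := hcdf₀ q
    rw [if_neg (by linarith), if_pos hq'] at h
    have he : (((2:ℕ):ℝ) - 1)⁻¹ = 1 := by norm_num
    rw [he, Real.rpow_one] at h
    constructor
    · rw [← h]; exact ENNReal.toReal_nonneg
    · rw [← h]
      have := (ENNReal.toReal_le_toReal (measure_ne_top _ _) ENNReal.one_ne_top).2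
        (prob_le_one (μ := μ 2) (s := Iic q))
      simpa using this
  have hGn : ∀ q : ℝ, 0 ≤ q → q ≤ qM →
      ((μ n) (Iic q)).toReal = (deriv c q / deriv (Vval F g) q) ^ (((n:ℝ) - 1)⁻¹) := by
    intro q hq hq'
    have h := hcdf1 q
    rwa [if_neg (by linarith), if_pos hq'] at h
  have hGn1 : ∀ q : ℝ, 0 ≤ q → q ≤ qM →
      ((μ (n+1)) (Iic q)).toReal = (deriv c q / deriv (Vval F g) q) ^ (((n:ℝ))⁻¹) := by
    intro q hq hq'
    have h := hcdf2 q
    rw [if_neg (by linarith), if_pos hq'] at h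
    rw [h]
    congr 1
    push_cast
    ring
  have hzero : ∀ k, 2 ≤ k → ∀ q : ℝ, q < 0 → (μ k) (Iic q) = 0 := by
    intro k hk q hq
    obtain ⟨hpk, hck⟩ := hμ k hk
    have h := hck q
    rw [if_pos hq] at h
    rcases (ENNReal.toReal_eq_zero_iff _).1 h with h' | h'
    · exact h'
    · exact absurd h' (measure_ne_top (μ k) (Iic q))
  have hone : ∀ k, 2 ≤ k → ∀ q : ℝ, qM < q → (μ k) (Iic q) = 1 := by
    intro k hk q hq
    obtain ⟨hpk, hck⟩ := hμ k hk
    have h := hck q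
    rw [if_neg (by linarith), if_neg (by linarith)] at h
    have h2 : ENNReal.ofReal (((μ k) (Iic q)).toReal) = ENNReal.ofReal 1 := by rw [h]
    rwa [ENNReal.ofReal_toReal (measure_ne_top _ _), ENNReal.ofReal_one] at h2
  have hIicqM : ∀ k, 2 ≤ k → (μ k) (Iic qM) = 1 := by
    intro k hk
    obtain ⟨hpk, -⟩ := hμ k hk
    haveI := hpk
    have hseq : Iic qM = ⋂ j : ℕ, Iic (qM + ((j:ℝ)+1)⁻¹) := by
      ext x
      simp only [mem_Iic, mem_iInter]
      constructor
      · intro h j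
        have hj : (0:ℝ) < ((j:ℝ)+1)⁻¹ := by positivity
        linarith
      · intro h
        by_contra hx
        push_neg at hx
        obtain ⟨j, hj⟩ := exists_nat_one_div_lt (show (0:ℝ) < x - qM by linarith)
        rw [one_div] at hj
        have := h j
        linarith
    have hanti : Antitone fun j : ℕ => Iic (qM + ((j:ℝ)+1)⁻¹) := by
      intro a b hab
      apply Iic_subset_Iic.2
      have hc1 : ((a:ℝ)+1) ≤ ((b:ℝ)+1) := by
        have : (a:ℝ) ≤ (b:ℝ) := by exact_mod_cast hab
        linarith
      have := inv_anti₀ (by positivity : (0:ℝ) < (a:ℝ)+1) hc1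
      linarith
    have htend := tendsto_measure_iInter_atTop (μ := μ k)
      (fun j => measurableSet_Iic.nullMeasurableSet) hanti ⟨0, measure_ne_top _ _⟩
    rw [← hseq] at htend
    have hconst : ∀ j : ℕ, (μ k) (Iic (qM + ((j:ℝ)+1)⁻¹)) = 1 := by
      intro j
      apply hone k hk
      have : (0:ℝ) < ((j:ℝ)+1)⁻¹ := by positivity
      linarith
    have htend' : Tendsto (fun _ : ℕ => (1:ℝ≥0∞)) atTop (𝓝 ((μ k) (Iic qM))) := by
      refine htend.congr fun j => ?_
      simp only [Function.comp]
      rw [hconst j]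
    exact (tendsto_nhds_unique tendsto_const_nhds htend').symm
  have hIio0 : ∀ k, 2 ≤ k → (μ k) (Iio 0) = 0 := by
    intro k hk
    have hseq : Iio (0:ℝ) = ⋃ j : ℕ, Iic (-(((j:ℝ)+1)⁻¹)) := by
      ext x
      simp only [mem_Iio, mem_iUnion, mem_Iic]
      constructor
      · intro hx
        obtain ⟨j, hj⟩ := exists_nat_one_div_lt (show (0:ℝ) < -x by linarith)
        rw [one_div] at hj
        exact ⟨j, by linarith⟩
      · rintro ⟨j, hj⟩
        have : (0:ℝ) < ((j:ℝ)+1)⁻¹ := by positivity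
        linarith
    rw [hseq]
    apply measure_iUnion_null
    intro j
    apply hzero k hk
    have : (0:ℝ) < ((j:ℝ)+1)⁻¹ := by positivity
    linarith
  have hIcc1 : ∀ k, 2 ≤ k → (μ k) (Icc 0 qM) = 1 := by
    intro k hk
    have hset : Icc (0:ℝ) qM = Iic qM \ Iio 0 := by
      ext x
      simp only [mem_Icc, mem_diff, mem_Iic, mem_Iio, not_lt]
      tauto
    rw [hset]
    have hsub : Iio (0:ℝ) ⊆ Iic qM := fun x hx => le_trans (le_of_lt hx) hqM0
    rw [measure_diff hsub measurableSet_Iio.nullMeasurableSet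
      (by rw [hIio0 k hk]; exact ENNReal.zero_ne_top), hIicqM k hk, hIio0 k hk, tsub_zero]
  have hIoi1 : ∀ k, 2 ≤ k → ∀ q : ℝ, qM < q → (μ k) (Ioi q) = 0 := by
    intro k hk q hq
    obtain ⟨hpk, -⟩ := hμ k hk
    haveI := hpk
    rw [← compl_Iic, measure_compl measurableSet_Iic (measure_ne_top _ _), measure_univ,
      hone k hk q hq, tsub_self]
  have hIoiToReal : ∀ k, 2 ≤ k → ∀ q : ℝ,
      ((μ k) (Ioi q)).toReal = 1 - ((μ k) (Iic q)).toReal := by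
    intro k hk q
    obtain ⟨hpk, -⟩ := hμ k hk
    haveI := hpk
    rw [← compl_Iic, measure_compl measurableSet_Iic (measure_ne_top _ _), measure_univ,
      ENNReal.toReal_sub_of_le prob_le_one ENNReal.one_ne_top, ENNReal.toReal_one]
  -- the two monotone transfer functions
  have hc0 : 0 ≤ c0 F := c0_nonneg hF'0 hF'c
  set fx : ℝ → ℝ := fun z => Abar βe F (clamp qM z) with hfxdef
  set fy : ℝ → ℝ := fun z => c0 F * clamp qM z - Abar βe F (clamp qM z) with hfydef
  have hfxeq : ∀ z ∈ Icc (0:ℝ) qM, fx z = Abar βe F z := fun z hz => by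
    simp only [hfxdef]
    rw [clamp_eq hz]
  have hfyeq : ∀ z ∈ Icc (0:ℝ) qM, fy z = c0 F * z - Abar βe F z := fun z hz => by
    simp only [hfydef]
    rw [clamp_eq hz]
  have hfxmono : Monotone fx := fun z z' hzz =>
    Abar_mono h0 hβm hF'c hF'0 (clamp_mem hqM0).1 (clamp_mono hzz)
  have hfymono : Monotone fy := by
    intro z z' hzz
    have h1 := Abar_lip h0 hβm hF'c hF'0 (clamp_mem (x := z) hqM0).1 (clamp_mono hzz)
    have h2 : clamp qM z ≤ clamp qM z' := clamp_mono hzz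
    simp only [hfydef]
    nlinarith
  have hfxcont : Continuous fx := by
    refine (LipschitzWith.of_dist_le_mul (K := (c0 F).toNNReal) (f := fx) ?_).continuous
    intro z z'
    rw [Real.dist_eq, Real.dist_eq, Real.coe_toNNReal _ hc0]
    calc |fx z - fx z'| ≤ c0 F * |clamp qM z - clamp qM z'| :=
        Abar_abs_sub h0 hβm hF'c hF'0 (clamp_mem hqM0).1 (clamp_mem hqM0).1
      _ ≤ c0 F * |z - z'| := mul_le_mul_of_nonneg_left (clamp_lip _ _) hc0
  have hfycont : Continuous fy := by
    refine (LipschitzWith.of_dist_le_mul (K := (c0 F + c0 F).toNNReal) (f := fy) ?_).continuous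
    intro z z'
    rw [Real.dist_eq, Real.dist_eq, Real.coe_toNNReal _ (by linarith)]
    have t1 : |c0 F * clamp qM z - c0 F * clamp qM z'| ≤ c0 F * |z - z'| := by
      rw [← mul_sub, abs_mul, abs_of_nonneg hc0]
      exact mul_le_mul_of_nonneg_left (clamp_lip _ _) hc0
    have t2 : |Abar βe F (clamp qM z) - Abar βe F (clamp qM z')| ≤ c0 F * |z - z'| :=
      le_trans (Abar_abs_sub h0 hβm hF'c hF'0 (clamp_mem hqM0).1 (clamp_mem hqM0).1)
        (mul_le_mul_of_nonneg_left (clamp_lip _ _) hc0)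
    have t3 : |fy z - fy z'|
        = |(c0 F * clamp qM z - c0 F * clamp qM z')
            - (Abar βe F (clamp qM z) - Abar βe F (clamp qM z'))| := by
      simp only [hfydef]
      ring_nf
    rw [t3]
    calc |(c0 F * clamp qM z - c0 F * clamp qM z')
            - (Abar βe F (clamp qM z) - Abar βe F (clamp qM z'))|
        ≤ |c0 F * clamp qM z - c0 F * clamp qM z'|
            + |Abar βe F (clamp qM z) - Abar βe F (clamp qM z')| := abs_sub _ _
      _ ≤ (c0 F + c0 F) * |z - z'| := by linarith
  set CB : ℝ := |Abar βe F 0| + |Abar βe F qM| + c0 F * qM with hCBdef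
  have hfxb : ∀ z, |fx z| ≤ CB := by
    intro z
    have h1 : Abar βe F 0 ≤ fx z :=
      Abar_mono h0 hβm hF'c hF'0 le_rfl (clamp_mem hqM0).1
    have h2 : fx z ≤ Abar βe F qM :=
      Abar_mono h0 hβm hF'c hF'0 (clamp_mem hqM0).1 (clamp_mem hqM0).2
    have h3 : 0 ≤ c0 F * qM := mul_nonneg hc0 hqM0
    rw [hCBdef, abs_le]
    constructor
    · nlinarith [neg_abs_le (Abar βe F 0), abs_nonneg (Abar βe F qM)]
    · nlinarith [le_abs_self (Abar βe F qM), abs_nonneg (Abar βe F 0)]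
  have hfyb : ∀ z, |fy z| ≤ CB := by
    intro z
    have h1 : Abar βe F 0 ≤ Abar βe F (clamp qM z) :=
      Abar_mono h0 hβm hF'c hF'0 le_rfl (clamp_mem hqM0).1
    have h2 : Abar βe F (clamp qM z) ≤ Abar βe F qM :=
      Abar_mono h0 hβm hF'c hF'0 (clamp_mem hqM0).1 (clamp_mem hqM0).2
    have h3 : 0 ≤ c0 F * clamp qM z := mul_nonneg hc0 (clamp_mem hqM0).1
    have h4 : c0 F * clamp qM z ≤ c0 F * qM :=
      mul_le_mul_of_nonneg_left (clamp_mem hqM0).2 hc0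
    rw [hCBdef]
    simp only [hfydef]
    rw [abs_le]
    constructor
    · nlinarith [le_abs_self (Abar βe F qM), abs_nonneg (Abar βe F 0)]
    · nlinarith [neg_abs_le (Abar βe F 0), abs_nonneg (Abar βe F qM)]
  -- representation of welfare
  have hrepr1 := eqWelfare_repr h0 hβm hF'c hqM0 (μ n) (hIcc1 n hn) n hn
    hfxeq hfyeq hfxcont.measurable hfycont.measurable hfxb hfyb
  have hrepr2 := eqWelfare_repr h0 hβm hF'c hqM0 (μ (n+1)) (hIcc1 (n+1) (by omega)) (n+1)
    (by omega) hfxeq hfyeq hfxcont.measurable hfycont.measurable hfxb hfyb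
  rw [hrepr1, hrepr2]
  -- laws of order statistics
  have hmXn : Measurable (Xstat : (Fin n → ℝ) → ℝ) := measurable_Xstat (by omega)
  have hmXn1 : Measurable (Xstat : (Fin (n+1) → ℝ) → ℝ) := measurable_Xstat (by omega)
  have hmYn : Measurable (Ystat : (Fin n → ℝ) → ℝ) := measurable_Ystat hn
  have hmYn1 : Measurable (Ystat : (Fin (n+1) → ℝ) → ℝ) := measurable_Ystat (by omega)
  haveI hPXn : IsProbabilityMeasure (Measure.map (Xstat : (Fin n → ℝ) → ℝ)
      (Measure.pi fun _ : Fin n => μ n)) := Measure.isProbabilityMeasure_map hmXn.aemeasurable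
  haveI hPXn1 : IsProbabilityMeasure (Measure.map (Xstat : (Fin (n+1) → ℝ) → ℝ)
      (Measure.pi fun _ : Fin (n+1) => μ (n+1))) := Measure.isProbabilityMeasure_map hmXn1.aemeasurable
  haveI hPYn : IsProbabilityMeasure (Measure.map (Ystat : (Fin n → ℝ) → ℝ)
      (Measure.pi fun _ : Fin n => μ n)) := Measure.isProbabilityMeasure_map hmYn.aemeasurable
  haveI hPYn1 : IsProbabilityMeasure (Measure.map (Ystat : (Fin (n+1) → ℝ) → ℝ)
      (Measure.pi fun _ : Fin (n+1) => μ (n+1))) := Measure.isProbabilityMeasure_map hmYn1.aemeasurable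
  have hiX1 : (∫ v, fx (Xstat v) ∂(Measure.pi fun _ : Fin n => μ n))
      = ∫ z, fx z ∂(Measure.map Xstat (Measure.pi fun _ : Fin n => μ n)) :=
    (integral_map hmXn.aemeasurable hfxcont.aestronglyMeasurable).symm
  have hiX2 : (∫ v, fx (Xstat v) ∂(Measure.pi fun _ : Fin (n+1) => μ (n+1)))
      = ∫ z, fx z ∂(Measure.map Xstat (Measure.pi fun _ : Fin (n+1) => μ (n+1))) :=
    (integral_map hmXn1.aemeasurable hfxcont.aestronglyMeasurable).symm
  have hiY1 : (∫ v, fy (Ystat v) ∂(Measure.pi fun _ : Fin n => μ n))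
      = ∫ z, fy z ∂(Measure.map Ystat (Measure.pi fun _ : Fin n => μ n)) :=
    (integral_map hmYn.aemeasurable hfycont.aestronglyMeasurable).symm
  have hiY2 : (∫ v, fy (Ystat v) ∂(Measure.pi fun _ : Fin (n+1) => μ (n+1)))
      = ∫ z, fy z ∂(Measure.map Ystat (Measure.pi fun _ : Fin (n+1) => μ (n+1))) :=
    (integral_map hmYn1.aemeasurable hfycont.aestronglyMeasurable).symm
  rw [hiX1, hiX2, hiY1, hiY2]
  -- CDFs of the laws
  have hcXn : ∀ q, (Measure.map (Xstat : (Fin n → ℝ) → ℝ)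
      (Measure.pi fun _ : Fin n => μ n)) (Iic q) = (μ n (Iic q))^n := by
    intro q
    rw [Measure.map_apply hmXn measurableSet_Iic, Xstat_law (by omega) (μ n) q]
  have hcXn1 : ∀ q, (Measure.map (Xstat : (Fin (n+1) → ℝ) → ℝ)
      (Measure.pi fun _ : Fin (n+1) => μ (n+1))) (Iic q) = (μ (n+1) (Iic q))^(n+1) := by
    intro q
    rw [Measure.map_apply hmXn1 measurableSet_Iic, Xstat_law (by omega) (μ (n+1)) q]
  have hcYn : ∀ q, (Measure.map (Ystat : (Fin n → ℝ) → ℝ)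
      (Measure.pi fun _ : Fin n => μ n)) (Iic q)
        = (μ n (Iic q))^n + n * (μ n (Ioi q) * (μ n (Iic q))^(n-1)) := by
    intro q
    rw [Measure.map_apply hmYn measurableSet_Iic, Ystat_law hn (μ n) q]
  have hcYn1 : ∀ q, (Measure.map (Ystat : (Fin (n+1) → ℝ) → ℝ)
      (Measure.pi fun _ : Fin (n+1) => μ (n+1))) (Iic q)
        = (μ (n+1) (Iic q))^(n+1) + (n+1) * (μ (n+1) (Ioi q) * (μ (n+1) (Iic q))^n) := by
    intro q
    rw [Measure.map_apply hmYn1 measurableSet_Iic, Ystat_law (by omega) (μ (n+1)) q]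
    norm_num
  -- dominance for the maximum
  have hdomX : ∀ q, (Measure.map (Xstat : (Fin n → ℝ) → ℝ)
      (Measure.pi fun _ : Fin n => μ n)) (Iic q)
        ≤ (Measure.map (Xstat : (Fin (n+1) → ℝ) → ℝ)
            (Measure.pi fun _ : Fin (n+1) => μ (n+1))) (Iic q) := by
    intro q
    rw [hcXn q, hcXn1 q]
    rcases lt_or_ge q 0 with hq | hq
    · rw [hzero n hn q hq, zero_pow (show n ≠ 0 by omega)]
      positivity
    rcases le_or_gt q qM with hq2 | hq2
    · have h1 : (μ n (Iic q))^n ≠ ⊤ := ENNReal.pow_ne_top (measure_ne_top _ _)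
      have h2 : (μ (n+1) (Iic q))^(n+1) ≠ ⊤ := ENNReal.pow_ne_top (measure_ne_top _ _)
      rw [← ENNReal.toReal_le_toReal h1 h2, ENNReal.toReal_pow, ENNReal.toReal_pow,
        hGn q hq hq2, hGn1 q hq hq2]
      exact scalarA (hrb q hq hq2).1 (hrb q hq hq2).2 hn
    · rw [hone n hn q hq2, hone (n+1) (by omega) q hq2, one_pow, one_pow]
  -- dominance for the second-order statistic
  have hdomY : ∀ q, (Measure.map (Ystat : (Fin n → ℝ) → ℝ)
      (Measure.pi fun _ : Fin n => μ n)) (Iic q)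
        ≤ (Measure.map (Ystat : (Fin (n+1) → ℝ) → ℝ)
            (Measure.pi fun _ : Fin (n+1) => μ (n+1))) (Iic q) := by
    intro q
    rw [hcYn q, hcYn1 q]
    rcases lt_or_ge q 0 with hq | hq
    · rw [hzero n hn q hq, zero_pow (show n ≠ 0 by omega),
        zero_pow (show n - 1 ≠ 0 by omega)]
      simp
    rcases le_or_gt q qM with hq2 | hq2
    · have hne1 : (μ n (Iic q))^n + (n : ℝ≥0∞) * (μ n (Ioi q) * (μ n (Iic q))^(n-1)) ≠ ⊤ :=
        ENNReal.add_ne_top.2 ⟨ENNReal.pow_ne_top (measure_ne_top _ _),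
          ENNReal.mul_ne_top (ENNReal.natCast_ne_top n)
            (ENNReal.mul_ne_top (measure_ne_top _ _)
              (ENNReal.pow_ne_top (measure_ne_top _ _)))⟩
      have hne2 : (μ (n+1) (Iic q))^(n+1)
          + ((n:ℝ≥0∞)+1) * (μ (n+1) (Ioi q) * (μ (n+1) (Iic q))^n) ≠ ⊤ :=
        ENNReal.add_ne_top.2 ⟨ENNReal.pow_ne_top (measure_ne_top _ _),
          ENNReal.mul_ne_top (by simp)
            (ENNReal.mul_ne_top (measure_ne_top _ _)
              (ENNReal.pow_ne_top (measure_ne_top _ _)))⟩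
      rw [← ENNReal.toReal_le_toReal hne1 hne2]
      rw [ENNReal.toReal_add (ENNReal.pow_ne_top (measure_ne_top _ _))
          (ENNReal.mul_ne_top (ENNReal.natCast_ne_top n)
            (ENNReal.mul_ne_top (measure_ne_top _ _)
              (ENNReal.pow_ne_top (measure_ne_top _ _)))),
        ENNReal.toReal_add (ENNReal.pow_ne_top (measure_ne_top _ _))
          (ENNReal.mul_ne_top (by simp)
            (ENNReal.mul_ne_top (measure_ne_top _ _)
              (ENNReal.pow_ne_top (measure_ne_top _ _)))),
        ENNReal.toReal_mul, ENNReal.toReal_mul, ENNReal.toReal_mul, ENNReal.toReal_mul,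
        ENNReal.toReal_pow, ENNReal.toReal_pow, ENNReal.toReal_pow, ENNReal.toReal_pow,
        ENNReal.toReal_natCast, hIoiToReal n hn q, hIoiToReal (n+1) (by omega) q,
        hGn q hq hq2, hGn1 q hq hq2]
    
      have hsB := scalarB (hrb q hq hq2).1 (hrb q hq hq2).2 hn
      have hcast : ((((n:ℝ≥0∞))+1)).toReal = (n:ℝ) + 1 := by
        rw [ENNReal.toReal_add (ENNReal.natCast_ne_top n) ENNReal.one_ne_top,
          ENNReal.toReal_natCast, ENNReal.toReal_one]
      rw [hcast]
      exact hsB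
    · rw [hone n hn q hq2, hone (n+1) (by omega) q hq2, hIoi1 n hn q hq2,
        hIoi1 (n+1) (by omega) q hq2]
      simp
  -- support of the laws
  have hsXn : (Measure.map (Xstat : (Fin n → ℝ) → ℝ)
      (Measure.pi fun _ : Fin n => μ n)) (Iic qM) = 1 := by
    rw [hcXn qM, hIicqM n hn, one_pow]
  have hsXn1 : (Measure.map (Xstat : (Fin (n+1) → ℝ) → ℝ)
      (Measure.pi fun _ : Fin (n+1) => μ (n+1))) (Iic qM) = 1 := by
    rw [hcXn1 qM, hIicqM (n+1) (by omega), one_pow]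
  have hsYn : (Measure.map (Ystat : (Fin n → ℝ) → ℝ)
      (Measure.pi fun _ : Fin n => μ n)) (Iic qM) = 1 := by
    rw [hcYn qM, hIicqM n hn]
    have : (μ n) (Ioi qM) = 0 := by
      obtain ⟨hpk, -⟩ := hμ n hn
      rw [← compl_Iic, measure_compl measurableSet_Iic (measure_ne_top _ _), measure_univ,
        hIicqM n hn, tsub_self]
    rw [this]
    simp
  have hsYn1 : (Measure.map (Ystat : (Fin (n+1) → ℝ) → ℝ)
      (Measure.pi fun _ : Fin (n+1) => μ (n+1))) (Iic qM) = 1 := by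
    rw [hcYn1 qM, hIicqM (n+1) (by omega)]
    have : (μ (n+1)) (Ioi qM) = 0 := by
      rw [← compl_Iic, measure_compl measurableSet_Iic (measure_ne_top _ _), measure_univ,
        hIicqM (n+1) (by omega), tsub_self]
    rw [this]
    simp
  -- conclude by stochastic dominance
  have hX := integral_mono_of_cdf_le hsXn hsXn1 hfxmono hfxcont hfxb hdomX
  have hY := integral_mono_of_cdf_le hsYn hsYn1 hfymono hfycont hfyb hdomY
  linarith
end
end

section
/- Assume linear preferences u(q,θ) = θq, θ uniformly distributed on [0,1], and cost c(q) = (q/a)^α with a > 0 and α > 1. Then V(q) = q/4, the monopolist cap is q^M = (a^α/(4α))^{1/(α−1)}, the symmetric duopoly equilibrium cap distribution is H(q) = min{4α q^{α−1}/a^α, 1}, monopoly welfare is W^M = q^M/8 + q^M/4 − c(q^M), and expected duopoly welfare is W₂ = E[X/8 + 3Y/8], where X and Y are the first- and second-order statistics of two i.i.d. draws from H. As α → ∞, the difference W₂ − W^M converges to a/8. -/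
open MeasureTheory Set Filter Topology Real

noncomputable section

/-- The maximal virtual surplus with linear preferences `u(q,θ) = θq` and uniform
types: `V(qcap)` is the supremum of `∫₀¹ (2θ - 1) q̃(θ) dθ` over nondecreasing
allocations bounded above by `qcap`. -/
def Vlin (qcap : ℝ) : ℝ :=
  sSup {v | ∃ q : ℝ → ℝ, Measurable q ∧ MonotoneOn q (Icc (0:ℝ) 1) ∧
    (∀ θ ∈ Icc (0:ℝ) 1, q θ ∈ Icc (0:ℝ) qcap) ∧
    v = ∫ θ in (0:ℝ)..1, (2 * θ - 1) * q θ}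

/-- The monopolist cap with cost `c(q) = (q/a)^α`. -/
def qMlin (a α : ℝ) : ℝ := (a ^ α / (4 * α)) ^ ((α - 1)⁻¹)

/-- The symmetric duopoly equilibrium cap distribution. -/
def Hlin (a α q : ℝ) : ℝ :=
  if q < 0 then 0 else min (4 * α * q ^ (α - 1) / a ^ α) 1

namespace Stmt19Aux

lemma integral_maxpart (C : ℝ) :
    ∫ θ in (0:ℝ)..1, max (2 * θ - 1) 0 * C = C / 4 := by
  have hc : Continuous fun θ : ℝ => max (2 * θ - 1) 0 * C := by
    continuity
  have i1 : IntervalIntegrable (fun θ : ℝ => max (2 * θ - 1) 0 * C) volume 0 (1/2) :=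
    hc.intervalIntegrable _ _
  have i2 : IntervalIntegrable (fun θ : ℝ => max (2 * θ - 1) 0 * C) volume (1/2) 1 :=
    hc.intervalIntegrable _ _
  have h1 : ∫ θ in (0:ℝ)..(1/2), max (2 * θ - 1) 0 * C = 0 := by
    rw [intervalIntegral.integral_congr (g := fun _ => (0:ℝ))]
    · simp
    · intro θ hθ
      rw [uIcc_of_le (by norm_num)] at hθ
      have : 2 * θ - 1 ≤ 0 := by nlinarith [hθ.2]
      simp [max_eq_right this]
  have h2 : ∫ θ in (1/2:ℝ)..1, max (2 * θ - 1) 0 * C = C / 4 := by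
    rw [intervalIntegral.integral_congr (g := fun θ => (2 * θ - 1) * C)]
    · have : ∫ θ in (1/2:ℝ)..1, (2 * θ - 1) * C
          = (∫ θ in (1/2:ℝ)..1, (2 * θ - 1)) * C := by
        rw [intervalIntegral.integral_mul_const]
      rw [this]
      have h4 : ∫ θ in (1/2:ℝ)..1, (2 * θ - 1) = 1/4 := by
        have hf : IntervalIntegrable (fun θ : ℝ => 2 * θ) volume (1/2) 1 :=
          (by fun_prop : Continuous fun θ : ℝ => 2 * θ).intervalIntegrable _ _
        have hg : IntervalIntegrable (fun _ : ℝ => (1:ℝ)) volume (1/2) 1 :=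
          continuous_const.intervalIntegrable _ _
        rw [intervalIntegral.integral_sub hf hg, intervalIntegral.integral_const_mul,
          integral_id, intervalIntegral.integral_const]
        norm_num
      rw [h4]; ring
    · intro θ hθ
      rw [uIcc_of_le (by norm_num)] at hθ
      have : (0:ℝ) ≤ 2 * θ - 1 := by nlinarith [hθ.1]
      simp [max_eq_left this]
  rw [← intervalIntegral.integral_add_adjacent_intervals i1 i2, h1, h2, zero_add]

lemma Vlin_eq (q : ℝ) (hq : 0 ≤ q) : Vlin q = q / 4 := by
  set S := {v | ∃ qf : ℝ → ℝ, Measurable qf ∧ MonotoneOn qf (Icc (0:ℝ) 1) ∧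
    (∀ θ ∈ Icc (0:ℝ) 1, qf θ ∈ Icc (0:ℝ) q) ∧
    v = ∫ θ in (0:ℝ)..1, (2 * θ - 1) * qf θ} with hS
  have hbound : ∀ v ∈ S, v ≤ q / 4 := by
    rintro v ⟨qf, hmeas, -, hval, rfl⟩
    have hint : IntervalIntegrable (fun θ => (2 * θ - 1) * qf θ) volume 0 1 := by
      rw [intervalIntegrable_iff, uIoc_of_le (by norm_num : (0:ℝ) ≤ 1)]
      refine Integrable.mono' (integrable_const q)
        (((measurable_id.const_mul 2).sub measurable_const).mul hmeas).aestronglyMeasurable ?_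
      rw [ae_restrict_iff' measurableSet_Ioc]
      refine ae_of_all _ fun θ hθ => ?_
      have hm := hval θ ⟨hθ.1.le, hθ.2⟩
      have h1 : |2 * θ - 1| ≤ 1 := by rw [abs_le]; constructor <;> nlinarith [hθ.1, hθ.2]
      have h2 : |qf θ| ≤ q := by rw [abs_le]; constructor <;> linarith [hm.1, hm.2]
      calc ‖(2 * θ - 1) * qf θ‖ = |2 * θ - 1| * |qf θ| := abs_mul _ _
        _ ≤ 1 * q := mul_le_mul h1 h2 (abs_nonneg _) zero_le_one
        _ = q := one_mul q
    have hmono : ∫ θ in (0:ℝ)..1, (2 * θ - 1) * qf θ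
        ≤ ∫ θ in (0:ℝ)..1, max (2 * θ - 1) 0 * q := by
      refine intervalIntegral.integral_mono_on (by norm_num) hint
        ((by continuity : Continuous fun θ : ℝ => max (2 * θ - 1) 0 * q).intervalIntegrable _ _)
        fun θ hθ => ?_
      have hm := hval θ hθ
      rcases le_or_gt (2 * θ - 1) 0 with h | h
      · calc (2 * θ - 1) * qf θ ≤ 0 := mul_nonpos_of_nonpos_of_nonneg h hm.1
          _ ≤ max (2 * θ - 1) 0 * q := mul_nonneg (le_max_right _ _) hq
      · rw [max_eq_left h.le]
        exact mul_le_mul_of_nonneg_left hm.2 h.le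
    calc _ ≤ _ := hmono
      _ = q / 4 := integral_maxpart q
  have hmem : q / 4 ∈ S := by
    refine ⟨fun θ => if θ < 1/2 then 0 else q, ?_, ?_, ?_, ?_⟩
    · exact Measurable.ite (measurableSet_lt measurable_id measurable_const)
        measurable_const measurable_const
    · intro x _ y _ hxy
      show (if x < 1/2 then (0:ℝ) else q) ≤ (if y < 1/2 then (0:ℝ) else q)
      by_cases hx : x < 1/2
      · rw [if_pos hx]; split <;> simp [hq]
      · rw [if_neg hx, if_neg (fun hy => hx (lt_of_le_of_lt hxy hy))]
    · intro θ _
      show (if θ < 1/2 then (0:ℝ) else q) ∈ Icc 0 q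
      split <;> simp [hq]
    · rw [intervalIntegral.integral_congr
        (g := fun θ => max (2 * θ - 1) 0 * q) ?_, integral_maxpart]
      intro θ _
      show (2 * θ - 1) * (if θ < 1/2 then (0:ℝ) else q) = max (2 * θ - 1) 0 * q
      by_cases h : θ < 1/2
      · have : 2 * θ - 1 ≤ 0 := by nlinarith
        rw [if_pos h, max_eq_right this, mul_zero, zero_mul]
      · have : (0:ℝ) ≤ 2 * θ - 1 := by push_neg at h; nlinarith
        rw [if_neg h, max_eq_left this]
  exact le_antisymm (csSup_le ⟨q / 4, hmem⟩ hbound) (le_csSup ⟨q / 4, hbound⟩ hmem)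

section parts23
variable {a α : ℝ} (ha : 0 < a) (hα : 1 < α)
include ha hα

lemma qM_pos : 0 < qMlin a α :=
  rpow_pos_of_pos (div_pos (rpow_pos_of_pos ha α) (by linarith)) _

lemma qM_key : (qMlin a α) ^ (α - 1) = a ^ α / (4 * α) :=
  rpow_inv_rpow (le_of_lt (div_pos (rpow_pos_of_pos ha α) (by linarith))) (by linarith)

lemma qM_cost : (qMlin a α / a) ^ α = qMlin a α / (4 * α) := by
  set m := qMlin a α with hmdef
  have hm : 0 < m := qM_pos ha hα
  have hkey := qM_key ha hα
  have haα : (0:ℝ) < a ^ α := rpow_pos_of_pos ha α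
  rw [Real.div_rpow hm.le ha.le]
  have hmα : m ^ α = m * (a ^ α / (4 * α)) := by
    have : m ^ α = m ^ (1 + (α - 1)) := by norm_num
    rw [this, Real.rpow_add hm, Real.rpow_one, hkey]
  rw [hmα]
  field_simp

lemma key_ineq {q : ℝ} (hq : 0 ≤ q) :
    q / 4 - (q / a) ^ α ≤ qMlin a α / 4 - (qMlin a α / a) ^ α := by
  set m := qMlin a α with hmdef
  have hm : 0 < m := qM_pos ha hα
  have hma : (m / a) ^ α = m / (4 * α) := qM_cost ha hα
  have hber : 1 + α * (q / m - 1) ≤ (q / m) ^ α := by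
    have h := one_add_mul_self_le_rpow_one_add
      (s := q / m - 1) (by have : 0 ≤ q / m := div_nonneg hq hm.le; linarith) hα.le
    simpa using h
  have hqa : (q / m) ^ α * (m / a) ^ α = (q / a) ^ α := by
    rw [← Real.mul_rpow (div_nonneg hq hm.le) (div_nonneg hm.le ha.le)]
    congr 1
    field_simp
  have hα0 : (0:ℝ) < α := by linarith
  have hmain : m / (4 * α) + (q - m) / 4 ≤ (q / a) ^ α := by
    rw [← hqa, hma]
    calc m / (4 * α) + (q - m) / 4 = (1 + α * (q / m - 1)) * (m / (4 * α)) := by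
          field_simp
      _ ≤ (q / m) ^ α * (m / (4 * α)) :=
          mul_le_mul_of_nonneg_right hber (by positivity)
  rw [hma]
  linarith

lemma key_ineq_strict {q : ℝ} (hq : 0 ≤ q) (hne : q ≠ qMlin a α) :
    q / 4 - (q / a) ^ α < qMlin a α / 4 - (qMlin a α / a) ^ α := by
  set m := qMlin a α with hmdef
  have hm : 0 < m := qM_pos ha hα
  have hma : (m / a) ^ α = m / (4 * α) := qM_cost ha hα
  have hber : 1 + α * (q / m - 1) < (q / m) ^ α := by
    have h := one_add_mul_self_lt_rpow_one_add
      (s := q / m - 1) (by have : 0 ≤ q / m := div_nonneg hq hm.le; linarith)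
      (by
        intro h0
        apply hne
        have : q / m = 1 := by linarith
        field_simp at this
        linarith) hα
    simpa using h
  have hqa : (q / m) ^ α * (m / a) ^ α = (q / a) ^ α := by
    rw [← Real.mul_rpow (div_nonneg hq hm.le) (div_nonneg hm.le ha.le)]
    congr 1
    field_simp
  have hα0 : (0:ℝ) < α := by linarith
  have hmain : m / (4 * α) + (q - m) / 4 < (q / a) ^ α := by
    rw [← hqa, hma]
    calc m / (4 * α) + (q - m) / 4 = (1 + α * (q / m - 1)) * (m / (4 * α)) := by
          field_simp
      _ < (q / m) ^ α * (m / (4 * α)) :=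
          mul_lt_mul_of_pos_right hber (by positivity)
  rw [hma]
  linarith

end parts23

lemma tendsto_qM {a : ℝ} (ha : 0 < a) :
    Tendsto (fun α => qMlin a α) atTop (nhds a) := by
  have h1 : Tendsto (fun α : ℝ => (α - 1)⁻¹) atTop (nhds 0) :=
    tendsto_inv_atTop_zero.comp (tendsto_atTop_add_const_right atTop (-1) tendsto_id)
  have hfrac : Tendsto (fun α : ℝ => α / (α - 1)) atTop (nhds 1) := by
    have : Tendsto (fun α : ℝ => 1 + (α - 1)⁻¹) atTop (nhds (1 + 0)) :=
      tendsto_const_nhds.add h1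
    rw [add_zero] at this
    refine this.congr' ?_
    filter_upwards [eventually_gt_atTop (1:ℝ)] with α hα
    have hα1 : α - 1 ≠ 0 := sub_ne_zero.2 (by linarith)
    field_simp; ring
  have hlog : Tendsto (fun α : ℝ => Real.log α / (α - 1)) atTop (nhds 0) := by
    have h2 : Tendsto (fun α : ℝ => (Real.log α / α) * (α / (α - 1))) atTop (nhds (0 * 1)) :=
      (Real.isLittleO_log_id_atTop.tendsto_div_nhds_zero).mul hfrac
    rw [zero_mul] at h2
    refine h2.congr' ?_
    filter_upwards [eventually_gt_atTop (1:ℝ)] with α hα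
    have hα0 : α ≠ 0 := by linarith
    have hα1 : α - 1 ≠ 0 := by intro h; apply hα.ne'; linarith
    field_simp
  have he : Tendsto (fun α : ℝ => (α * Real.log a - Real.log 4 - Real.log α) / (α - 1))
      atTop (nhds (Real.log a)) := by
    have h3 : Tendsto (fun α : ℝ =>
        (α / (α - 1)) * Real.log a - Real.log 4 * (α - 1)⁻¹ - Real.log α / (α - 1))
        atTop (nhds (1 * Real.log a - Real.log 4 * 0 - 0)) :=
      ((hfrac.mul tendsto_const_nhds).sub (tendsto_const_nhds.mul h1)).sub hlog
    have : (1 * Real.log a - Real.log 4 * 0 - 0) = Real.log a := by ring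
    rw [this] at h3
    refine h3.congr' ?_
    filter_upwards [eventually_gt_atTop (1:ℝ)] with α hα
    have hα1 : α - 1 ≠ 0 := by intro h; apply hα.ne'; linarith
    field_simp
  have hexp : Tendsto (fun α : ℝ =>
      Real.exp ((α * Real.log a - Real.log 4 - Real.log α) / (α - 1)))
      atTop (nhds (Real.exp (Real.log a))) := (Real.continuous_exp.tendsto _).comp he
  rw [Real.exp_log ha] at hexp
  refine hexp.congr' ?_
  filter_upwards [eventually_gt_atTop (1:ℝ)] with α hα
  have hα0 : (0:ℝ) < α := by linarith
  have hbase : (0:ℝ) < a ^ α / (4 * α) := by positivity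
  have h4a : a ^ α ≠ 0 := (Real.rpow_pos_of_pos ha α).ne'
  have h4b : (4:ℝ) * α ≠ 0 := by positivity
  rw [qMlin, Real.rpow_def_of_pos hbase, Real.log_div h4a h4b,
    Real.log_rpow ha, Real.log_mul (by norm_num) hα0.ne']
  congr 1
  rw [div_eq_mul_inv]
  ring

lemma integral_bounds (μ : Measure ℝ) [IsProbabilityMeasure μ] (M s : ℝ) (hM : 0 < M)
    (hs0 : 0 < s) (h0 : μ (Iic 0) = 0) (hM1 : μ (Ioi M) = 0) :
    (s / 2) * ((μ (Ioi s)).toReal) ^ 2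
      ≤ (∫ p : ℝ × ℝ, (max p.1 p.2 / 8 + 3 * min p.1 p.2 / 8) ∂(μ.prod μ)) ∧
    (∫ p : ℝ × ℝ, (max p.1 p.2 / 8 + 3 * min p.1 p.2 / 8) ∂(μ.prod μ)) ≤ M / 2 := by
  set g : ℝ × ℝ → ℝ := fun p => max p.1 p.2 / 8 + 3 * min p.1 p.2 / 8 with hg
  set P := μ.prod μ with hP
  have hgc : Continuous g := by
    apply Continuous.add
    · exact (continuous_fst.max continuous_snd).div_const 8
    · exact (continuous_const.mul (continuous_fst.min continuous_snd)).div_const 8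
  have hAc : μ (Ioc 0 M)ᶜ = 0 := by
    refine measure_mono_null (fun x hx => ?_) (measure_union_null h0 hM1)
    simp only [mem_compl_iff, mem_Ioc, not_and_or, not_lt, not_le] at hx
    rcases hx with h | h
    · exact Or.inl h
    · exact Or.inr h
  have hae : ∀ᵐ p ∂P, p.1 ∈ Ioc 0 M ∧ p.2 ∈ Ioc 0 M := by
    rw [eventually_and]
    constructor
    · rw [ae_iff]
      have h5 : {p : ℝ × ℝ | ¬ p.1 ∈ Ioc 0 M} = (Ioc 0 M)ᶜ ×ˢ (univ : Set ℝ) := by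
        ext p; simp
      rw [h5, hP, Measure.prod_prod, hAc, zero_mul]
    · rw [ae_iff]
      have h5 : {p : ℝ × ℝ | ¬ p.2 ∈ Ioc 0 M} = (univ : Set ℝ) ×ˢ (Ioc 0 M)ᶜ := by
        ext p; simp
      rw [h5, hP, Measure.prod_prod, hAc, mul_zero]
  have hb : ∀ p : ℝ × ℝ, p.1 ∈ Ioc 0 M → p.2 ∈ Ioc 0 M → 0 ≤ g p ∧ g p ≤ M / 2 := by
    rintro ⟨x, y⟩ hx hy
    have h1 : 0 < min x y := lt_min hx.1 hy.1
    have h2 : max x y ≤ M := max_le hx.2 hy.2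
    have h3 : min x y ≤ M := le_trans (min_le_left _ _) hx.2
    have h4 : 0 < max x y := lt_of_lt_of_le h1 (min_le_max)
    constructor
    · show (0:ℝ) ≤ max x y / 8 + 3 * min x y / 8
      positivity
    · show max x y / 8 + 3 * min x y / 8 ≤ M / 2
      nlinarith
  have hInt : Integrable g P := by
    refine Integrable.mono' (integrable_const (M / 2)) hgc.aestronglyMeasurable ?_
    filter_upwards [hae] with p hp
    rw [Real.norm_eq_abs, abs_le]
    have h := hb p hp.1 hp.2
    exact ⟨le_trans (by linarith : -(M / 2) ≤ 0) h.1, h.2⟩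
  constructor
  · have hmarkov := mul_meas_ge_le_integral_of_nonneg
      (f := g) (μ := P) ?_ hInt (s / 2)
    · refine le_trans ?_ hmarkov
      have hsub : Ioi s ×ˢ Ioi s ⊆ {p : ℝ × ℝ | s / 2 ≤ g p} := by
        rintro ⟨x, y⟩ ⟨hx, hy⟩
        simp only [mem_Ioi] at hx hy
        have hmin : s ≤ min x y := le_min hx.le hy.le
        have hmax : min x y ≤ max x y := min_le_max
        show s / 2 ≤ max x y / 8 + 3 * min x y / 8
        have hmax2 : s ≤ max x y := le_trans hmin hmax
        nlinarith
      have hmono := measure_mono (μ := P) hsub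
      rw [hP, Measure.prod_prod] at hmono
      have htr : ((μ (Ioi s)).toReal) ^ 2 ≤ (P {p : ℝ × ℝ | s / 2 ≤ g p}).toReal := by
        rw [sq, ← ENNReal.toReal_mul]
        exact ENNReal.toReal_mono (measure_ne_top _ _) hmono
      exact mul_le_mul_of_nonneg_left htr (by linarith)
    · filter_upwards [hae] with p hp using (hb p hp.1 hp.2).1
  · have : ∫ _ : ℝ × ℝ, (M / 2) ∂P = M / 2 := by
      simp [measure_univ]
    rw [← this]
    refine integral_mono_ae hInt (integrable_const _) ?_
    filter_upwards [hae] with p hp using (hb p hp.1 hp.2).2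

end Stmt19Aux

open Stmt19Aux

/-- linear-uniform example. With `u(q,θ) = θq`, uniform types and
`c(q) = (q/a)^α`: `V(q) = q/4`; the monopolist cap is `q^M = (a^α/(4α))^{1/(α-1)}`;
the symmetric duopoly cap distribution is `H(q) = min{4αq^{α-1}/a^α, 1}` (i.e. equals
`min{c'(q)/V'(q), 1}`); and, with monopoly welfare `W^M = q^M/8 + q^M/4 - c(q^M)` and
expected duopoly welfare `W₂ = E[X/8 + 3Y/8]` for `X, Y` the order statistics of two
i.i.d. draws from `H`, the difference `W₂ - W^M` converges to `a/8` as `α → ∞`. -/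
theorem stmt19 (a : ℝ) (ha : 0 < a)
    (μ : ℝ → Measure ℝ)
    (hμ : ∀ α : ℝ, 1 < α → IsProbabilityMeasure (μ α) ∧
      ∀ q : ℝ, ((μ α) (Iic q)).toReal = Hlin a α q) :
    (∀ q : ℝ, 0 ≤ q → Vlin q = q / 4) ∧
    (∀ α : ℝ, 1 < α →
      (∀ q : ℝ, 0 ≤ q →
        Vlin q - (q / a) ^ α ≤ Vlin (qMlin a α) - (qMlin a α / a) ^ α) ∧
      ∀ q : ℝ, 0 ≤ q →
        (∀ q' : ℝ, 0 ≤ q' → Vlin q' - (q' / a) ^ α ≤ Vlin q - (q / a) ^ α) →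
        q = qMlin a α) ∧
    (∀ α : ℝ, 1 < α → ∀ q : ℝ, 0 < q → q ≤ qMlin a α →
      Hlin a α q = min (deriv (fun z => (z / a) ^ α) q / deriv Vlin q) 1) ∧
    Tendsto
      (fun α : ℝ =>
        (∫ p : ℝ × ℝ, (max p.1 p.2 / 8 + 3 * min p.1 p.2 / 8)
            ∂((μ α).prod (μ α))) -
          (qMlin a α / 8 + qMlin a α / 4 - (qMlin a α / a) ^ α))
      atTop (nhds (a / 8)) := by
  refine ⟨Vlin_eq, ?_, ?_, ?_⟩
  · -- part 2
    intro α hα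
    have hm := qM_pos ha hα
    constructor
    · intro q hq
      rw [Vlin_eq q hq, Vlin_eq _ hm.le]
      exact key_ineq ha hα hq
    · intro q hq hmax
      by_contra hne
      have h1 := hmax (qMlin a α) hm.le
      rw [Vlin_eq q hq, Vlin_eq _ hm.le] at h1
      have h2 := key_ineq_strict ha hα hq hne
      linarith
  · -- part 3
    intro α hα q hq _
    have hα0 : (0:ℝ) < α := by linarith
    have hVd : deriv Vlin q = 1/4 := by
      have hev : Vlin =ᶠ[nhds q] fun x => x / 4 := by
        filter_upwards [Ioi_mem_nhds hq] with x hx using Vlin_eq x (le_of_lt hx)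
      rw [hev.deriv_eq]
      exact ((hasDerivAt_id q).div_const 4).deriv
    have hcd : deriv (fun z => (z / a) ^ α) q = (1/a) * α * (q / a) ^ (α - 1) := by
      have h1 : HasDerivAt (fun z : ℝ => z / a) (1/a) q := (hasDerivAt_id q).div_const a
      have h2 := h1.rpow_const (p := α) (Or.inl (by positivity : (0:ℝ) < q / a).ne')
      exact h2.deriv
    rw [hVd, hcd, Hlin, if_neg (not_lt.2 hq.le)]
    congr 1
    rw [Real.div_rpow hq.le ha.le, Real.rpow_sub ha, Real.rpow_one]
    field_simp [ha.ne', (rpow_pos_of_pos ha α).ne']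
  · -- part 4
    rw [Metric.tendsto_nhds]
    intro ε hε
    set ε₀ : ℝ := min (ε / a) (1/2) with hε₀def
    have hε₀pos : 0 < ε₀ := lt_min (div_pos hε ha) (by norm_num)
    have hε₀half : ε₀ ≤ 1/2 := min_le_right _ _
    have hε₀a : ε₀ * a ≤ ε := by
      have := min_le_left (ε / a) (1/2)
      calc ε₀ * a ≤ (ε / a) * a := mul_le_mul_of_nonneg_right this ha.le
        _ = ε := by field_simp
    -- limits
    have hTm := tendsto_qM ha
    have h4 : Tendsto (fun α : ℝ => ((4:ℝ) * α)⁻¹) atTop (nhds 0) := by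
      refine tendsto_inv_atTop_zero.comp ?_
      exact Tendsto.const_mul_atTop (by norm_num) tendsto_id
    have hT2 : Tendsto (fun α : ℝ => qMlin a α / (4 * α)) atTop (nhds 0) := by
      have h := hTm.mul h4
      rw [mul_zero] at h
      exact h.congr fun α => (div_eq_mul_inv _ _).symm
    have hTr : Tendsto (fun α : ℝ => (1 - ε₀) ^ (α - 1)) atTop (nhds 0) := by
      have h := (tendsto_rpow_atTop_of_base_lt_one (1 - ε₀) (by linarith) (by linarith)).comp
        (tendsto_atTop_add_const_right atTop (-1) tendsto_id)
      exact h.congr fun α => by rw [Function.comp_apply]; norm_num [sub_eq_add_neg]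
    have hUB : Tendsto (fun α : ℝ => qMlin a α / 8 + qMlin a α / (4 * α))
        atTop (nhds (a / 8)) := by
      have h := (hTm.div_const 8).add hT2
      rw [add_zero] at h
      exact h
    have hLB : Tendsto (fun α : ℝ =>
        (1 - ε₀) * qMlin a α / 2 * (1 - (1 - ε₀) ^ (α - 1)) ^ 2 - 3 * qMlin a α / 8)
        atTop (nhds ((1 - ε₀) * a / 2 - 3 * a / 8)) := by
      have h : Tendsto (fun α : ℝ =>
          (1 - ε₀) * qMlin a α / 2 * (1 - (1 - ε₀) ^ (α - 1)) ^ 2 - 3 * qMlin a α / 8)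
          atTop (nhds ((1 - ε₀) * a / 2 * (1 - 0) ^ 2 - 3 * a / 8)) :=
        (((tendsto_const_nhds.mul hTm).div_const 2).mul
          ((tendsto_const_nhds.sub hTr).pow 2)).sub ((tendsto_const_nhds.mul hTm).div_const 8)
      have heq : (1 - ε₀) * a / 2 * (1 - 0) ^ 2 - 3 * a / 8
          = (1 - ε₀) * a / 2 - 3 * a / 8 := by ring
      rw [heq] at h
      exact h
    have hℓgt : a / 8 - ε < (1 - ε₀) * a / 2 - 3 * a / 8 := by nlinarith
    have hE1 := hLB.eventually (eventually_gt_nhds hℓgt)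
    have hE2 := hUB.eventually (eventually_lt_nhds (by linarith : a / 8 < a / 8 + ε))
    filter_upwards [hE1, hE2, eventually_gt_atTop (1:ℝ)] with α h1 h2 hα
    obtain ⟨hP, hCDF⟩ := hμ α hα
    have hα0 : (0:ℝ) < α := by linarith
    have hM : 0 < qMlin a α := qM_pos ha hα
    have hMc : (qMlin a α / a) ^ α = qMlin a α / (4 * α) := qM_cost ha hα
    have hkey : (qMlin a α) ^ (α - 1) = a ^ α / (4 * α) := qM_key ha hα
    have haα : (0:ℝ) < a ^ α := rpow_pos_of_pos ha α
    set M := qMlin a α with hMdef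
    have hIic0 : μ α (Iic 0) = 0 := by
      have h := hCDF 0
      have hH : Hlin a α 0 = 0 := by
        rw [Hlin, if_neg (lt_irrefl 0), Real.zero_rpow (by intro h'; linarith : α - 1 ≠ 0)]
        simp
      rw [hH] at h
      exact ((ENNReal.toReal_eq_zero_iff _).1 h).resolve_right (measure_ne_top _ _)
    have hIicM : μ α (Iic M) = 1 := by
      have h := hCDF M
      have hH : Hlin a α M = 1 := by
        rw [Hlin, if_neg (not_lt.2 hM.le), hkey]
        have : 4 * α * (a ^ α / (4 * α)) / a ^ α = 1 := by field_simp
        rw [this, min_self]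
      rw [hH] at h
      exact (ENNReal.toReal_eq_one_iff _).1 h
    have hIoiM : μ α (Ioi M) = 0 := by
      have hc := measure_compl (measurableSet_Iic (a := M)) (measure_ne_top (μ α) _)
      rw [compl_Iic, hIicM, measure_univ, tsub_self] at hc
      exact hc
    set s : ℝ := (1 - ε₀) * M with hsdef
    have hs0 : 0 < s := mul_pos (by linarith) hM
    have hHs : (μ α (Ioi s)).toReal = 1 - (1 - ε₀) ^ (α - 1) := by
      have hc := measure_compl (measurableSet_Iic (a := s)) (measure_ne_top (μ α) _)
      rw [compl_Iic, measure_univ] at hc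
      have hle : μ α (Iic s) ≤ 1 := prob_le_one
      rw [hc, ENNReal.toReal_sub_of_le hle ENNReal.one_ne_top, ENNReal.toReal_one, hCDF s]
      congr 1
      rw [Hlin, if_neg (not_lt.2 hs0.le)]
      have hmul : ((1 - ε₀) * M) ^ (α - 1) = (1 - ε₀) ^ (α - 1) * M ^ (α - 1) :=
        Real.mul_rpow (by linarith) hM.le
      rw [hsdef, hmul, hkey]
      have heq : 4 * α * ((1 - ε₀) ^ (α - 1) * (a ^ α / (4 * α))) / a ^ α
          = (1 - ε₀) ^ (α - 1) := by field_simp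
      rw [heq]
      exact min_eq_left (Real.rpow_le_one (by linarith) (by linarith) (by linarith))
    haveI := hP
    obtain ⟨hlb, hub⟩ := integral_bounds (μ α) M s hM hs0 hIic0 hIoiM
    rw [hHs] at hlb
    rw [Real.dist_eq, abs_lt, hMc]
    have hrw : s / 2 * (1 - (1 - ε₀) ^ (α - 1)) ^ 2
        = (1 - ε₀) * M / 2 * (1 - (1 - ε₀) ^ (α - 1)) ^ 2 := by
      rw [hsdef]
    rw [hrw] at hlb
    have hpos : 0 < M / (4 * α) := by positivity
    constructor
    · linarith
    · linarith
end
end
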